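/- arXiv:1008.1667 — 6 statements merged into one kernel-verified Lean document; each statement's English description precedes it below -/
import Mathlib

section
/- For every natural number n there exists a binary string x_n such that x_n is not in L_{≤n}, i.e. no minimal description of x_n (with respect to the standard encoding S₀) uses a transducer with at most n states. -/
/-! ## Transducers

A deterministic sequential transducer over the binary alphabet `Bool`
(`false` = 0, `true` = 1), with state set `{0, …, n-1}` (representing the
states `1, …, n` of the paper) and start state `0` (the paper's state `1`). -/

structure Transducer where
  n : ℕ
  npos : 0 < n
  delta : Fin n → Bool → Fin n × List Bool

namespace Transducer

/-- The start state. -/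
def start (T : Transducer) : Fin T.n := ⟨0, T.npos⟩

/-- The (state) size of a transducer: its number of states. -/
def size (T : Transducer) : ℕ := T.n

/-- Running `T` from state `q` on an input string: resulting state and output. -/
def run (T : Transducer) (q : Fin T.n) : List Bool → Fin T.n × List Bool
  | [] => (q, [])
  | a :: x =>
    let s := T.delta q a
    let r := T.run s.1 x
    (r.1, s.2 ++ r.2)

/-- The function `{0,1}* → {0,1}*` computed by the transducer `T`. -/
def output (T : Transducer) (p : List Bool) : List Bool :=
  (T.run T.start p).2

end Transducer

/-- The one-state identity transducer. -/
def idTransducer : Transducer :=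
  ⟨1, Nat.one_pos, fun q b => (q, [b])⟩

/-! ## The standard encoding `S₀` -/

/-- `bin i`: the binary representation of `i ≥ 1`, most significant bit first. -/
def binRep (i : ℕ) : List Bool := (Nat.bits i).reverse

/-- `v† = v₁0v₂0⋯v_{m-1}0v_m1`. -/
def dagger : List Bool → List Bool
  | [] => []
  | [a] => [a, true]
  | a :: b :: v => a :: false :: dagger (b :: v)

/-- `v◇`: the bitwise complement of `(1v)†`. -/
def diamond (v : List Bool) : List Bool := (dagger (true :: v)).map (!·)

/-- The encoding `bin(i_t)‡ ⬝ v_t◇` of a single transition from state `j`,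
where `bin(i_t)‡ = ε` for a self-loop and `bin(i_t)† ` otherwise. -/
def encTransition {n : ℕ} (j : Fin n) (t : Fin n × List Bool) : List Bool :=
  (if t.1 = j then [] else dagger (binRep (t.1.val + 1))) ++ diamond t.2

/-- The standard encoding of a transducer: the concatenation, over the states
`j = 1, …, n` in order, of the encodings of the transitions on input `0` and
input `1` from `j`. -/
def stdEnc (T : Transducer) : List Bool :=
  (List.finRange T.n).flatMap fun j =>
    encTransition j (T.delta j false) ++ encTransition j (T.delta j true)

/-- `D_{S₀}`, the set of standard encodings of transducers. -/
def DS0 : Set (List Bool) := Set.range stdEnc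

/-- The set of sizes `|σ| + |p|` of descriptions `(T_σ, p)` of `x` with respect
to the standard encoding. -/
def stdSizes (x : List Bool) : Set ℕ :=
  {c | ∃ (T : Transducer) (p : List Bool),
    T.output p = x ∧ c = (stdEnc T).length + p.length}

/-- `C x`: the finite-state complexity of `x` w.r.t. the standard encoding. -/
noncomputable def Cstd (x : List Bool) : ℕ := sInf (stdSizes x)

/-- `L_{≤ m}` w.r.t. the standard encoding: strings having a minimal
description by a transducer with at most `m` states. -/
def stdLle (m : ℕ) : Set (List Bool) :=
  {x | ∃ (T : Transducer) (p : List Bool),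
    T.output p = x ∧ (stdEnc T).length + p.length = Cstd x ∧ T.size ≤ m}

/-! ## Computable encodings -/

/-- A computable encoding `S = (D_S, f_S)` of all transducers: a decidable
(computable) set `D_S ⊆ {0,1}*` together with a computable bijection
`f_S : D_S → 𝒯_DGSM`, presented via a decoding function
`decode : {0,1}* → Option Transducer` defined exactly on `D_S`; its
computability is expressed via the (injective) standard encoding `stdEnc`. -/
structure CompEncoding where
  D : Set (List Bool)
  dec : ComputablePred (· ∈ D)
  decode : List Bool → Option Transducer
  decode_dom : ∀ σ, (decode σ).isSome ↔ σ ∈ D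
  decode_inj : ∀ σ₁ ∈ D, ∀ σ₂ ∈ D, decode σ₁ = decode σ₂ → σ₁ = σ₂
  decode_surj : ∀ T : Transducer, ∃ σ, decode σ = some T
  decode_comp : Computable fun σ => (decode σ).map stdEnc

namespace CompEncoding

/-- The set of sizes `|σ| + |p|` of descriptions `(T^S_σ, p)` of `x`. -/
def sizes (S : CompEncoding) (x : List Bool) : Set ℕ :=
  {c | ∃ (σ : List Bool) (T : Transducer) (p : List Bool),
    S.decode σ = some T ∧ T.output p = x ∧ c = σ.length + p.length}

/-- `C_S x`: the finite-state complexity of `x` w.r.t. the encoding `S`. -/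
noncomputable def C (S : CompEncoding) (x : List Bool) : ℕ := sInf (S.sizes x)

/-- `L^S_{≤ m}`: strings having a minimal description by a transducer with at
most `m` states (this is empty for `m = 0` since every transducer has at
least one state). -/
def Lle (S : CompEncoding) (m : ℕ) : Set (List Bool) :=
  {x | ∃ (σ : List Bool) (T : Transducer) (p : List Bool),
    S.decode σ = some T ∧ T.output p = x ∧
    σ.length + p.length = S.C x ∧ T.size ≤ m}

/-- `L^S_{= m} = L^S_{≤ m} \ L^S_{≤ m-1}`. -/
def Leq (S : CompEncoding) (m : ℕ) : Set (List Bool) := S.Lle m \ S.Lle (m - 1)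

/-- `L^S_{∃min m}`: strings having a minimal description by a transducer with
exactly `m` states. -/
def LexistsMin (S : CompEncoding) (m : ℕ) : Set (List Bool) :=
  {x | ∃ (σ : List Bool) (T : Transducer) (p : List Bool),
    S.decode σ = some T ∧ T.output p = x ∧
    σ.length + p.length = S.C x ∧ T.size = m}

end CompEncoding

/-! ## The strings `u_i` and `x_n(m)` from the proof of Theorem 1 -/

/-- `u_i = 1 0^i 1^{2n+2-i}` (for `1 ≤ i ≤ 2n+1`, a string of length `2n+3`). -/
def u (n i : ℕ) : List Bool :=
  true :: (List.replicate i false ++ List.replicate (2 * n + 2 - i) true)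

/-- `x_n(m) = u_1^{m²} u_2^{m²} ⋯ u_{2n+1}^{m²}`. -/
def xnm (n m : ℕ) : List Bool :=
  (List.range (2 * n + 1)).flatMap fun i => (List.replicate (m ^ 2) (u n (i + 1))).flatten

/-! ## The transducer `T₁` and input `p₁` from the proof of Theorem 1 -/

/-- The `2n`-state transducer `T₁` with `Δ(j,0) = (j, u_j^m)` for `1 ≤ j ≤ 2n`,
`Δ(j,1) = (j+1, ε)` for `1 ≤ j ≤ 2n-1`, and `Δ(2n,1) = (2n, u_{2n+1}^m)`. -/
def T1 (n m : ℕ) (hn : 0 < n) : Transducer where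
  n := 2 * n
  npos := by omega
  delta := fun j b =>
    match b with
    | false => (j, (List.replicate m (u n (j.val + 1))).flatten)
    | true =>
      if h : j.val + 1 < 2 * n then (⟨j.val + 1, h⟩, [])
      else (j, (List.replicate m (u n (2 * n + 1))).flatten)

/-- `p₁ = (0^m 1)^{2n-1} 0^m 1^m`. -/
def p1 (n m : ℕ) : List Bool :=
  (List.replicate (2 * n - 1) (List.replicate m false ++ [true])).flatten
    ++ List.replicate m false ++ List.replicate m true

/-! ## The transducers `T_n` from Section 5 -/

/-- `p_i`: the `i`-th prime (`p₁ = 2`, `p₂ = 3`, …). -/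
noncomputable def nthPrime (i : ℕ) : ℕ := Nat.nth Nat.Prime (i - 1)

/-- The `n`-state transducer `T_n` with `Δ_n(1,0) = (1, 0^{p_n})`,
`Δ_n(i,0) = (i, ε)` for `2 ≤ i ≤ n`, `Δ_n(j,1) = (j+1, ε)` for
`1 ≤ j ≤ n-1`, and `Δ_n(n,1) = (n, ε)`. -/
noncomputable def Tsec5 (n : ℕ) (hn : 0 < n) : Transducer where
  n := n
  npos := hn
  delta := fun j b =>
    match b with
    | false =>
      if j.val = 0 then (j, List.replicate (nthPrime n) false) else (j, [])
    | true =>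
      if h : j.val + 1 < n then (⟨j.val + 1, h⟩, []) else (j, [])

/-- The defining properties of the encoding `S₁` of Theorem 4: each `T_n` is
encoded by `bin(n)`, and every transducer that is not one of the `T_n` is
encoded by `0` concatenated with its standard encoding. -/
def IsS1 (S : CompEncoding) : Prop :=
  (∀ (n : ℕ) (hn : 0 < n), S.decode (binRep n) = some (Tsec5 n hn)) ∧
  (∀ T : Transducer, (∀ (n : ℕ) (hn : 0 < n), T ≠ Tsec5 n hn) →
    S.decode (false :: stdEnc T) = some T)

/-- The defining properties of the encoding `S₁'` of Corollary 2: each `T_n` is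
encoded by `bin(n)† ⬝ 1^n`, and every transducer `T` that is not one of the
`T_n`, with standard encoding `σ`, is encoded by `0 ⬝ σ† ⬝ 1^{2^{|σ|}}`. -/
def IsS1' (S : CompEncoding) : Prop :=
  (∀ (n : ℕ) (hn : 0 < n),
    S.decode (dagger (binRep n) ++ List.replicate n true) = some (Tsec5 n hn)) ∧
  (∀ T : Transducer, (∀ (n : ℕ) (hn : 0 < n), T ≠ Tsec5 n hn) →
    S.decode (false :: (dagger (stdEnc T) ++
      List.replicate (2 ^ (stdEnc T).length) true)) = some T)



namespace Stmt0Aux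

def Bk (c : ℕ) : List Bool := List.replicate c false ++ [true]

def mark (i : ℕ) : List Bool := true :: Bk i

@[simp] lemma Bk_length (c : ℕ) : (Bk c).length = c + 1 := by simp [Bk]

@[simp] lemma mark_length (i : ℕ) : (mark i).length = i + 2 := by simp [mark, Bk]

def occ (w v : List Bool) : ℕ :=
  (List.range v.length).countP (fun s => w.isPrefixOf (v.drop s))

lemma occ_le_length (w v : List Bool) : occ w v ≤ v.length := by
  simpa [occ] using List.countP_le_length (l := List.range v.length)
    (p := fun s => w.isPrefixOf (v.drop s))

lemma countP_le_add {α : Type*} {p q r : α → Bool} :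
    ∀ (l : List α), (∀ a ∈ l, p a = true → q a = true ∨ r a = true) →
      l.countP p ≤ l.countP q + l.countP r := by
  intro l h
  induction l with
  | nil => simp
  | cons a t ih =>
    have ht := ih (fun b hb => h b (List.mem_cons_of_mem _ hb))
    simp only [List.countP_cons]
    by_cases hp : p a = true
    · rcases h a (List.mem_cons_self) hp with hqr | hqr <;> simp [hp, hqr] <;> omega
    · simp [hp]
      omega

lemma prefix_of_prefix_append {α : Type*} {w a b : List α} (h : w <+: a ++ b)
    (hl : w.length ≤ a.length) : w <+: a := by
  obtain ⟨t, ht⟩ := h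
  have h1 : w = (a ++ b).take w.length := by
    rw [← ht]; simp
  rw [List.take_append, Nat.sub_eq_zero_of_le hl] at h1
  simp at h1
  rw [h1]
  exact List.take_prefix _ _

lemma drop_add_append (u v : List Bool) (s : ℕ) :
    (u ++ v).drop (u.length + s) = v.drop s := by
  rw [List.drop_append, List.drop_eq_nil_of_le (by omega),
    Nat.add_sub_cancel_left, List.nil_append]

lemma drop_append_small (u v : List Bool) {s : ℕ} (hs : s ≤ u.length) :
    (u ++ v).drop s = u.drop s ++ v := by
  rw [List.drop_append, Nat.sub_eq_zero_of_le hs, List.drop_zero]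

lemma occ_append_ge (w u v : List Bool) : occ w u + occ w v ≤ occ w (u ++ v) := by
  unfold occ
  rw [List.length_append, List.range_add, List.countP_append]
  gcongr
  · apply List.countP_mono_left
    intro s hs hp
    rw [List.isPrefixOf_iff_prefix] at hp ⊢
    rw [drop_append_small u v (le_of_lt (List.mem_range.mp hs))]
    exact hp.trans (List.prefix_append _ _)
  · rw [List.countP_map]
    apply le_of_eq
    apply List.countP_congr
    intro s hs
    simp only [Function.comp]
    rw [drop_add_append]

lemma occ_append_le (w u v : List Bool) (hw : w ≠ []) :
    occ w (u ++ v) ≤ occ w u + occ w v + (w.length - 1) := by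
  unfold occ
  rw [List.length_append, List.range_add, List.countP_append]
  have h2 : ((List.range v.length).map (u.length + ·)).countP
      (fun s => w.isPrefixOf ((u ++ v).drop s)) = (List.range v.length).countP
      (fun s => w.isPrefixOf (v.drop s)) := by
    rw [List.countP_map]
    apply List.countP_congr
    intro s hs
    simp only [Function.comp]
    rw [drop_add_append]
  rw [h2]
  have h1 : (List.range u.length).countP (fun s => w.isPrefixOf ((u ++ v).drop s)) ≤
      (List.range u.length).countP (fun s => w.isPrefixOf (u.drop s)) +
      (List.range u.length).countP (fun s => decide (u.length < s + w.length)) := by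
    apply countP_le_add
    intro s hs hp
    by_cases hc : u.length < s + w.length
    · right; simpa using hc
    · left
      rw [List.isPrefixOf_iff_prefix] at hp ⊢
      push_neg at hc
      rw [drop_append_small u v (le_of_lt (List.mem_range.mp hs))] at hp
      exact prefix_of_prefix_append hp (by simp; omega)
  have h3 : (List.range u.length).countP (fun s => decide (u.length < s + w.length)) ≤
      w.length - 1 := by
    by_cases hc : u.length ≤ w.length - 1
    · calc _ ≤ (List.range u.length).length := List.countP_le_length
        _ ≤ _ := by simpa using hc
    · push_neg at hc
      have hsplit : List.range u.length = List.range (u.length - (w.length - 1)) ++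
          (List.range (w.length - 1)).map ((u.length - (w.length - 1)) + ·) := by
        rw [← List.range_add]
        congr 1
        omega
      rw [hsplit, List.countP_append]
      have hz : (List.range (u.length - (w.length - 1))).countP
          (fun s => decide (u.length < s + w.length)) = 0 := by
        rw [List.countP_eq_zero]
        intro s hs
        simp only [decide_eq_true_eq, not_lt]
        have := List.mem_range.mp hs
        have hw1 : 1 ≤ w.length := List.length_pos_iff.mpr hw
        omega
      rw [hz]
      calc _ ≤ (0 : ℕ) + ((List.range (w.length - 1)).map
            ((u.length - (w.length - 1)) + ·)).length := by
            gcongr; exact List.countP_le_length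
        _ ≤ _ := by simp
  omega

lemma occ_flatten_le (w : List Bool) (hw : w ≠ []) :
    ∀ E : List (List Bool), occ w E.flatten ≤ (E.map (occ w)).sum + E.length * w.length := by
  intro E
  induction E with
  | nil => simp [occ]
  | cons e E ih =>
    simp only [List.flatten_cons, List.map_cons, List.sum_cons, List.length_cons]
    have hmul : (E.length + 1) * w.length = E.length * w.length + w.length := by ring
    have hw1 : 1 ≤ w.length := List.length_pos_iff.mpr hw
    calc occ w (e ++ E.flatten) ≤ occ w e + occ w E.flatten + (w.length - 1) :=
          occ_append_le w _ _ hw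
      _ ≤ _ := by omega

lemma occ_infix_ge {w u v : List Bool} (h : u <:+: v) : occ w u ≤ occ w v := by
  obtain ⟨s, t, rfl⟩ := h
  calc occ w u ≤ occ w u + occ w t := Nat.le_add_right _ _
    _ ≤ occ w (u ++ t) := occ_append_ge _ _ _
    _ ≤ occ w s + occ w (u ++ t) := Nat.le_add_left _ _
    _ ≤ occ w (s ++ (u ++ t)) := occ_append_ge _ _ _
    _ = occ w (s ++ u ++ t) := by rw [List.append_assoc]

lemma occ_flatten_replicate_ge (w C : List Bool) (r : ℕ) :
    r * occ w C ≤ occ w (List.replicate r C).flatten := by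
  induction r with
  | zero => simp
  | succ r ih =>
    rw [List.replicate_succ, List.flatten_cons]
    calc (r + 1) * occ w C = occ w C + r * occ w C := by ring
      _ ≤ occ w C + occ w (List.replicate r C).flatten := by omega
      _ ≤ _ := occ_append_ge _ _ _

lemma occ_pair (i : ℕ) : 1 ≤ occ (mark i) (Bk i ++ Bk i) := by
  have hdrop : (Bk i ++ Bk i).drop i = mark i := by
    show ((List.replicate i false ++ [true]) ++ Bk i).drop i = mark i
    rw [List.append_assoc, List.drop_append]
    simp [mark]
  rw [Nat.one_le_iff_ne_zero, ← Nat.pos_iff_ne_zero, occ, List.countP_pos_iff]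
  refine ⟨i, List.mem_range.mpr (by simp [Bk]), ?_⟩
  simp [hdrop, List.isPrefixOf_iff_prefix]

lemma occ_pos_infix {w v : List Bool} (h : 0 < occ w v) : w <:+: v := by
  rw [occ, List.countP_pos_iff] at h
  obtain ⟨s, _, hp⟩ := h
  rw [List.isPrefixOf_iff_prefix] at hp
  exact hp.isInfix.trans (List.drop_suffix _ _).isInfix



lemma infix_append_cases {α : Type*} {z u v : List α} (h : z <:+: u ++ v) :
    z <:+: u ∨ z <:+: v ∨
      ∃ z₁ z₂, z = z₁ ++ z₂ ∧ z₁ ≠ [] ∧ z₁ <:+ u ∧ z₂ <+: v := by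
  obtain ⟨a, b, hab⟩ := h
  rw [List.append_assoc] at hab
  by_cases h1 : u.length ≤ a.length
  · right; left
    have hv := congrArg (List.drop u.length) hab
    rw [List.drop_left, List.drop_append,
      Nat.sub_eq_zero_of_le h1, List.drop_zero] at hv
    exact ⟨a.drop u.length, b, by rw [← List.append_assoc] at hv; exact hv⟩
  · push_neg at h1
    have hu := congrArg (List.take u.length) hab
    rw [List.take_left, List.take_append,
      List.take_of_length_le (by omega), List.take_append] at hu
    by_cases h2 : a.length + z.length ≤ u.length
    · left
      rw [List.take_of_length_le (by omega)] at hu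
      exact ⟨a, b.take (u.length - a.length - z.length),
        by rw [← List.append_assoc] at hu; exact hu⟩
    · right; right
      push_neg at h2
      rw [Nat.sub_eq_zero_of_le (show u.length - a.length ≤ z.length by omega),
        List.take_zero, List.append_nil] at hu
      have hv := congrArg (List.drop u.length) hab
      rw [List.drop_left, List.drop_append,
        List.drop_eq_nil_of_le (by omega), List.nil_append,
        List.drop_append,
        Nat.sub_eq_zero_of_le (show u.length - a.length ≤ z.length by omega),
        List.drop_zero] at hv
      refine ⟨z.take (u.length - a.length), z.drop (u.length - a.length),
        (List.take_append_drop _ _).symm, ?_, ⟨a, hu⟩, ⟨b, hv⟩⟩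
      intro hnil
      have hlen : (z.take (u.length - a.length)).length = 0 := by rw [hnil]; rfl
      rw [List.length_take] at hlen
      omega

@[simp] lemma count_true_Bk (c : ℕ) : (Bk c).count true = 1 := by
  simp [Bk, List.count_replicate]

@[simp] lemma count_true_mark (i : ℕ) : (mark i).count true = 2 := by
  simp [mark]

lemma mark_not_infix_Bk {j c : ℕ} (h : mark j <:+: Bk c) : False := by
  have := h.sublist.count_le true
  simp at this

lemma suffix_Bk {c : ℕ} {t : List Bool} (h : (true :: t) <:+ Bk c) : t = [] := by
  induction c with
  | zero =>
    rcases List.suffix_cons_iff.mp h with h' | h'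
    · simpa [Bk] using h'
    · exfalso
      have := h'.length_le
      simp [Bk] at this
  | succ c ih =>
    have hbk : Bk (c + 1) = false :: Bk c := by simp [Bk, List.replicate_succ]
    rw [hbk] at h
    rcases List.suffix_cons_iff.mp h with h' | h'
    · exact absurd (congrArg (·.head?) h') (by simp)
    · exact ih h'

lemma prefix_Bk : ∀ (i c : ℕ) (rest : List Bool),
    (List.replicate i false ++ [true]) <+: Bk c ++ rest → i = c := by
  intro i
  induction i with
  | zero =>
    intro c rest h
    cases c with
    | zero => rfl
    | succ d =>
      exfalso
      have hbk : Bk (d + 1) ++ rest = false :: (Bk d ++ rest) := by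
        simp [Bk, List.replicate_succ]
      rw [hbk] at h
      simp only [List.replicate_zero, List.nil_append] at h
      exact absurd (List.cons_prefix_cons.mp h).1 (by simp)
  | succ i ih =>
    intro c rest h
    cases c with
    | zero =>
      exfalso
      have hbk : Bk 0 ++ rest = true :: rest := by simp [Bk]
      rw [hbk, List.replicate_succ, List.cons_append] at h
      exact absurd (List.cons_prefix_cons.mp h).1 (by simp)
    | succ d =>
      have hbk : Bk (d + 1) ++ rest = false :: (Bk d ++ rest) := by
        simp [Bk, List.replicate_succ]
      rw [hbk, List.replicate_succ, List.cons_append] at h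
      have := ih d rest (List.cons_prefix_cons.mp h).2
      omega

lemma mark_infix_mem : ∀ (cs : List ℕ) (j : ℕ),
    mark j <:+: (cs.map Bk).flatten → j ∈ cs := by
  intro cs
  induction cs with
  | nil =>
    intro j h
    rw [List.map_nil, List.flatten_nil] at h
    have := h.sublist.length_le
    simp [mark, Bk] at this
  | cons c cs ih =>
    intro j h
    rw [List.map_cons, List.flatten_cons] at h
    rcases infix_append_cases h with h' | h' | ⟨z₁, z₂, hz, hne, hsuf, hpre⟩
    · exact absurd h' mark_not_infix_Bk
    · exact List.mem_cons_of_mem _ (ih j h')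
    · cases z₁ with
      | nil => exact absurd rfl hne
      | cons h1 t1 =>
        rw [mark] at hz
        rw [List.cons_append] at hz
        injection hz with hh ht
        subst hh
        have ht1 : t1 = [] := suffix_Bk hsuf
        subst ht1
        simp only [List.nil_append] at ht
        subst ht
        cases cs with
        | nil =>
          exfalso
          rw [List.map_nil, List.flatten_nil, List.prefix_nil] at hpre
          simpa [Bk] using congrArg List.length hpre
        | cons c₁ cs' =>
          rw [List.map_cons, List.flatten_cons] at hpre
          have := prefix_Bk j c₁ _ (by simpa [Bk] using hpre)
          subst this
          exact List.mem_cons_of_mem _ (List.mem_cons_self)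

lemma mark_order : ∀ (cs : List ℕ), cs.Pairwise (· ≤ ·) → ∀ (i j : ℕ) (t : List Bool),
    (mark i ++ t ++ mark j) <:+: (cs.map Bk).flatten → i ≤ j := by
  intro cs
  induction cs with
  | nil =>
    intro _ i j t h
    rw [List.map_nil, List.flatten_nil] at h
    have := h.sublist.length_le
    simp [mark, Bk] at this
  | cons c cs ih =>
    intro hp i j t h
    rw [List.pairwise_cons] at hp
    rw [List.map_cons, List.flatten_cons] at h
    rcases infix_append_cases h with h' | h' | ⟨z₁, z₂, hz, hne, hsuf, hpre⟩
    · exfalso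
      have := h'.sublist.count_le true
      simp [List.count_append] at this
      omega
    · exact ih hp.2 i j t h'
    · cases z₁ with
      | nil => exact absurd rfl hne
      | cons h1 t1 =>
        have hz' : (h1 :: t1) ++ z₂ = true :: (Bk i ++ (t ++ mark j)) := by
          rw [← hz, mark]; simp [List.append_assoc]
        rw [List.cons_append] at hz'
        injection hz' with hh ht
        subst hh
        have ht1 : t1 = [] := suffix_Bk hsuf
        subst ht1
        simp only [List.nil_append] at ht
        subst ht
        cases cs with
        | nil =>
          exfalso
          rw [List.map_nil, List.flatten_nil, List.prefix_nil] at hpre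
          simpa [Bk] using congrArg List.length hpre
        | cons c₁ cs' =>
          rw [List.map_cons, List.flatten_cons] at hpre
          -- Bk i is a prefix of z₂, hence of Bk c₁ ++ rest
          have hpre2 : (List.replicate i false ++ [true]) <+: Bk c₁ ++ (cs'.map Bk).flatten := by
            refine List.IsPrefix.trans ?_ hpre
            exact List.prefix_append _ _
          have hic : i = c₁ := prefix_Bk i c₁ _ hpre2
          have hmj : mark j <:+: ((c₁ :: cs').map Bk).flatten := by
            rw [List.map_cons, List.flatten_cons]
            refine List.IsInfix.trans ?_ hpre.isInfix
            exact ⟨Bk i ++ t, [], by simp [List.append_assoc]⟩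
          have hjmem := mark_infix_mem _ j hmj
          rcases List.mem_cons.mp hjmem with rfl | hj
          · omega
          · have := (List.pairwise_cons.mp hp.2).1 j hj
            omega





/-! ### Marker sets and the multi-marker measure -/

def Iset (K : ℕ) (v : List Bool) : Finset ℕ :=
  (Finset.Icc 1 K).filter (fun i => mark i <:+: v)

def Dm (K : ℕ) (v : List Bool) : ℕ := (Iset K v).card - 1

lemma Iset_mono (K : ℕ) {u v : List Bool} (h : u <:+: v) : Iset K u ⊆ Iset K v := by
  intro i hi
  simp only [Iset, Finset.mem_filter] at hi ⊢
  exact ⟨hi.1, hi.2.trans h⟩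

lemma Dm_le (K : ℕ) (v : List Bool) : Dm K v ≤ K - 1 := by
  have h1 : (Iset K v).card ≤ K := by
    calc (Iset K v).card ≤ (Finset.Icc 1 K).card := Finset.card_le_card (Finset.filter_subset _ _)
      _ = K := by rw [Nat.card_Icc]; omega
  unfold Dm
  omega

lemma infix_pattern {a b : ℕ} {u v : List Bool} (hu : mark a <:+: u) (hv : mark b <:+: v) :
    ∃ t, (mark a ++ t ++ mark b) <:+: (u ++ v) := by
  obtain ⟨s₁, t₁, rfl⟩ := hu
  obtain ⟨s₂, t₂, rfl⟩ := hv
  exact ⟨t₁ ++ s₂, s₁, t₂, by simp [List.append_assoc]⟩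

lemma Dm_superadd {cs : List ℕ} (hcs : cs.Pairwise (· ≤ ·)) {u v : List Bool}
    (h : (u ++ v) <:+: (cs.map Bk).flatten) (K : ℕ) :
    Dm K u + Dm K v ≤ Dm K (u ++ v) := by
  have hU : Iset K u ⊆ Iset K (u ++ v) := Iset_mono K ⟨[], v, by simp⟩
  have hV : Iset K v ⊆ Iset K (u ++ v) := Iset_mono K ⟨u, [], by simp⟩
  have hUV : Iset K u ∪ Iset K v ⊆ Iset K (u ++ v) := Finset.union_subset hU hV
  have hI : (Iset K u ∩ Iset K v).card ≤ 1 := by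
    rw [Finset.card_le_one]
    intro a ha b hb
    rw [Finset.mem_inter] at ha hb
    simp only [Iset, Finset.mem_filter] at ha hb
    have hab : a ≤ b := by
      obtain ⟨t, ht⟩ := infix_pattern ha.1.2 hb.2.2
      exact mark_order cs hcs a b t (ht.trans h)
    have hba : b ≤ a := by
      obtain ⟨t, ht⟩ := infix_pattern hb.1.2 ha.2.2
      exact mark_order cs hcs b a t (ht.trans h)
    omega
  have hcard := Finset.card_union_add_card_inter (Iset K u) (Iset K v)
  have hle := Finset.card_le_card hUV
  have hi1 : (Iset K u ∩ Iset K v).card ≤ (Iset K u).card :=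
    Finset.card_le_card (Finset.inter_subset_left)
  have hi2 : (Iset K u ∩ Iset K v).card ≤ (Iset K v).card :=
    Finset.card_le_card (Finset.inter_subset_right)
  unfold Dm
  omega

lemma Dm_flatten {cs : List ℕ} (hcs : cs.Pairwise (· ≤ ·)) (K : ℕ) :
    ∀ E : List (List Bool), E.flatten <:+: (cs.map Bk).flatten →
      (E.map (Dm K)).sum ≤ Dm K E.flatten := by
  intro E
  induction E with
  | nil => simp
  | cons e E ih =>
    intro h
    rw [List.flatten_cons] at h ⊢
    have hE : E.flatten <:+: (cs.map Bk).flatten :=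
      (List.IsInfix.trans ⟨e, [], by simp⟩ h)
    calc ((e :: E).map (Dm K)).sum = Dm K e + (E.map (Dm K)).sum := by simp
      _ ≤ Dm K e + Dm K E.flatten := by have := ih hE; omega
      _ ≤ Dm K (e ++ E.flatten) := Dm_superadd hcs h K

/-! ### The specific string -/

def csL (n k : ℕ) : List ℕ :=
  ((List.range (2*n+1)).map (fun a => List.replicate (2*(k*k)) (a+1))).flatten

def xW (n k : ℕ) : List Bool := ((csL n k).map Bk).flatten

def seg (k a : ℕ) : List Bool := (List.replicate (2*(k*k)) (Bk (a+1))).flatten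

lemma csL_sorted (n k : ℕ) : (csL n k).Pairwise (· ≤ ·) := by
  rw [csL, List.pairwise_flatten]
  constructor
  · intro l hl
    rw [List.mem_map] at hl
    obtain ⟨a, _, rfl⟩ := hl
    rw [List.pairwise_replicate]
    simp
  · rw [List.pairwise_map]
    have := List.pairwise_lt_range (n := 2*n+1)
    apply this.imp
    intro a b hab x hx y hy
    rw [List.eq_of_mem_replicate hx, List.eq_of_mem_replicate hy]
    omega

lemma flatten_map_flatten {α β : Type*} (f : α → List β) :
    ∀ css : List (List α),
      ((css.flatten).map f).flatten = (css.map (fun c => (c.map f).flatten)).flatten := by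
  intro css
  induction css with
  | nil => simp
  | cons c css ih =>
    simp only [List.flatten_cons, List.map_append, List.flatten_append, List.map_cons, ih]

lemma xW_eq (n k : ℕ) : xW n k = ((List.range (2*n+1)).map (seg k)).flatten := by
  rw [xW, csL, flatten_map_flatten, List.map_map]
  congr 1
  apply List.map_congr_left
  intro a _
  simp [seg, Function.comp, List.map_replicate]

lemma seg_infix (n k a : ℕ) (ha : a < 2*n+1) : seg k a <:+: xW n k := by
  rw [xW_eq]
  exact List.infix_of_mem_flatten (List.mem_map_of_mem (List.mem_range.mpr ha))

lemma flatten_rep_two {α : Type*} (y : List α) : ∀ m,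
    (List.replicate (2*m) y).flatten = (List.replicate m (y ++ y)).flatten := by
  intro m
  induction m with
  | zero => simp
  | succ m ih =>
    have h2 : 2*(m+1) = (2*m) + 1 + 1 := by ring
    rw [h2, List.replicate_succ, List.replicate_succ, List.flatten_cons, List.flatten_cons,
      List.replicate_succ, List.flatten_cons, ← List.append_assoc, ← ih]

lemma occ_seg (k a : ℕ) : k*k ≤ occ (mark (a+1)) (seg k a) := by
  rw [seg, flatten_rep_two]
  calc k*k = (k*k) * 1 := by ring
    _ ≤ (k*k) * occ (mark (a+1)) (Bk (a+1) ++ Bk (a+1)) := by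
        exact Nat.mul_le_mul_left _ (occ_pair (a+1))
    _ ≤ _ := occ_flatten_replicate_ge _ _ _

lemma occ_xW (n k i : ℕ) (h1 : 1 ≤ i) (h2 : i ≤ 2*n+1) : k*k ≤ occ (mark i) (xW n k) := by
  have ha : i - 1 < 2*n+1 := by omega
  have := occ_seg k (i-1)
  have heq : i - 1 + 1 = i := by omega
  rw [heq] at this
  exact this.trans (occ_infix_ge (seg_infix n k (i-1) ha))



/-! ### Emissions of a transducer run -/

lemma run_emissions (T : Transducer) : ∀ (p : List Bool) (q : Fin T.n),
    ∃ E : List (List Bool), (T.run q p).2 = E.flatten ∧ E.length = p.length ∧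
      ∀ e ∈ E, ∃ t : Fin T.n × Bool, e = (T.delta t.1 t.2).2 := by
  intro p
  induction p with
  | nil => exact fun q => ⟨[], by simp [Transducer.run], rfl, by simp⟩
  | cons a x ih =>
    intro q
    obtain ⟨E, h1, h2, h3⟩ := ih (T.delta q a).1
    refine ⟨(T.delta q a).2 :: E, ?_, by simp [h2], ?_⟩
    · simp [Transducer.run, h1]
    · intro e he
      rcases List.mem_cons.mp he with rfl | he'
      · exact ⟨(q, a), rfl⟩
      · exact h3 e he'

/-! ### Length facts about the standard encoding -/

lemma dagger_length : ∀ v : List Bool, (dagger v).length = 2 * v.length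
  | [] => rfl
  | [a] => rfl
  | a :: b :: v => by
    have ih := dagger_length (b :: v)
    simp only [dagger, List.length_cons] at ih ⊢
    omega

lemma diamond_length (v : List Bool) : (diamond v).length = 2 * v.length + 2 := by
  rw [diamond, List.length_map, dagger_length, List.length_cons]
  ring

lemma encTransition_length_ge {m : ℕ} (j : Fin m) (t : Fin m × List Bool) :
    2 * t.2.length + 2 ≤ (encTransition j t).length := by
  rw [encTransition, List.length_append, diamond_length]
  omega

lemma binRep_length_le (m : ℕ) : (binRep m).length ≤ m := by
  rw [binRep, List.length_reverse]
  rw [Nat.size_eq_bits_len]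
  exact Nat.size_le.mpr (Nat.lt_two_pow_self)

lemma encTransition_length_le {m : ℕ} (j : Fin m) (t : Fin m × List Bool) :
    (encTransition j t).length ≤ 2 * (t.1.val + 1) + 2 * t.2.length + 2 := by
  rw [encTransition, List.length_append, diamond_length]
  have h2 : (if t.1 = j then ([] : List Bool) else dagger (binRep (t.1.val + 1))).length ≤
      2 * (t.1.val + 1) := by
    split
    · simp
    · rw [dagger_length]
      have := binRep_length_le (t.1.val + 1)
      omega
  omega

lemma stdEnc_length_ge (T : Transducer) (q : Fin T.n) (b : Bool) :
    2 * ((T.delta q b).2).length + 2 ≤ (stdEnc T).length := by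
  rw [stdEnc, List.length_flatMap]
  have hmem : (List.length ∘ fun j =>
      encTransition j (T.delta j false) ++ encTransition j (T.delta j true)) q ∈
      (List.finRange T.n).map (List.length ∘ fun j =>
        encTransition j (T.delta j false) ++ encTransition j (T.delta j true)) :=
    List.mem_map_of_mem (List.mem_finRange q)
  refine le_trans ?_ (List.single_le_sum (fun x _ => Nat.zero_le x) _ hmem)
  simp only [Function.comp, List.length_append]
  have hf := encTransition_length_ge q (T.delta q false)
  have ht := encTransition_length_ge q (T.delta q true)
  cases b <;> omega

/-! ### The cheap transducer -/

def Wb (k j : ℕ) : List Bool := (List.replicate (2*k) (Bk (j+1))).flatten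

lemma Wb_length (k j : ℕ) : (Wb k j).length = 2*k*(j+2) := by
  simp [Wb, List.length_flatten, List.map_replicate, List.sum_replicate, smul_eq_mul, Bk]

def Tup (n k : ℕ) : Transducer where
  n := 2*n+1
  npos := by omega
  delta := fun j b =>
    match b with
    | false => (j, Wb k j.val)
    | true => if h : j.val + 1 < 2*n+1 then (⟨j.val+1, h⟩, []) else (j, [])

def pUp (n k : ℕ) : List Bool :=
  (List.replicate (2*n) (List.replicate k false ++ [true])).flatten ++ List.replicate k false

lemma pUp_length (n k : ℕ) : (pUp n k).length = 2*n*(k+1) + k := by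
  simp [pUp, List.length_flatten, List.map_replicate, List.sum_replicate, smul_eq_mul]

lemma run_append (T : Transducer) : ∀ (a b : List Bool) (q : Fin T.n),
    T.run q (a ++ b) = ((T.run (T.run q a).1 b).1, (T.run q a).2 ++ (T.run (T.run q a).1 b).2) := by
  intro a
  induction a with
  | nil => intro b q; simp [Transducer.run]
  | cons c x ih =>
    intro b q
    simp [Transducer.run, ih]

lemma run_falses (T : Transducer) (q : Fin T.n) (w : List Bool)
    (h : T.delta q false = (q, w)) :
    ∀ c, T.run q (List.replicate c false) = (q, (List.replicate c w).flatten) := by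
  intro c
  induction c with
  | zero => simp [Transducer.run]
  | succ c ih =>
    rw [List.replicate_succ, List.replicate_succ, List.flatten_cons]
    simp [Transducer.run, h, ih]

lemma flatten_rep_mul {α : Type*} (y : List α) : ∀ (a b : ℕ),
    (List.replicate a ((List.replicate b y).flatten)).flatten
      = (List.replicate (a*b) y).flatten := by
  intro a
  induction a with
  | zero => simp
  | succ a ih =>
    intro b
    have h1 : (a+1)*b = b + a*b := by ring
    rw [h1, List.replicate_succ, List.flatten_cons, List.replicate_add, List.flatten_append, ih]

lemma encTransition_self {m : ℕ} (j : Fin m) (w : List Bool) :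
    encTransition j (j, w) = diamond w := by
  simp [encTransition]

lemma Tup_delta_false (n k : ℕ) (q : Fin (Tup n k).n) :
    (Tup n k).delta q false = (q, Wb k q.val) := rfl

lemma Tup_run (n k : ℕ) : ∀ (d s : ℕ) (hs : s + d = 2*n),
    ((Tup n k).run ⟨s, show s < 2*n+1 by omega⟩
      ((List.replicate d (List.replicate k false ++ [true])).flatten ++ List.replicate k false)).2
    = ((List.range (d+1)).map (fun a => seg k (s + a))).flatten := by
  intro d
  induction d with
  | zero =>
    intro s hs
    simp only [List.replicate_zero, List.flatten_nil, List.nil_append]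
    rw [run_falses _ _ _ (Tup_delta_false n k _)]
    show (List.replicate k ((List.replicate (2*k) (Bk (s+1))).flatten)).flatten = _
    rw [flatten_rep_mul]
    simp only [List.range_succ, List.range_zero, List.nil_append, List.map_cons, List.map_nil,
      List.flatten_cons, List.flatten_nil, List.append_nil, Nat.add_zero]
    rw [seg]
    congr 1
    ring
  | succ d ih =>
    intro s hs
    have hrw : (List.replicate (d+1) (List.replicate k false ++ [true])).flatten
        ++ List.replicate k false
        = List.replicate k false ++ ([true] ++
          ((List.replicate d (List.replicate k false ++ [true])).flatten
            ++ List.replicate k false)) := by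
      rw [List.replicate_succ, List.flatten_cons]
      simp [List.append_assoc]
    rw [hrw, run_append, run_falses _ _ _ (Tup_delta_false n k _)]
    have hstep : (Tup n k).run ⟨s, show s < 2*n+1 by omega⟩ [true]
        = (⟨s+1, show s+1 < 2*n+1 by omega⟩, []) := by
      show ((((Tup n k).delta _ true).1 , ((Tup n k).delta _ true).2 ++ [])) = _
      have hd : (Tup n k).delta ⟨s, show s < 2*n+1 by omega⟩ true
          = (⟨s+1, show s+1 < 2*n+1 by omega⟩, []) := by
        show (if h : s + 1 < 2*n+1 then ((⟨s+1, h⟩ : Fin (2*n+1)), ([] : List Bool))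
          else (⟨s, show s < 2*n+1 by omega⟩, [])) = _
        rw [dif_pos (show s + 1 < 2*n+1 by omega)]
        rfl
      rw [hd]
      simp
    rw [run_append, hstep]
    simp only []
    rw [ih (s+1) (by omega)]
    show (List.replicate k ((List.replicate (2*k) (Bk (s+1))).flatten)).flatten ++ ([] ++ _) = _
    rw [flatten_rep_mul, List.nil_append]
    have hr : List.range (d+1+1) = 0 :: (List.range (d+1)).map (· + 1) :=
      List.range_succ_eq_map (n := d+1) ▸ by simp [List.range_succ_eq_map]
    rw [hr]
    simp only [List.map_cons, List.flatten_cons, Nat.add_zero, List.map_map]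
    congr 1
    · rw [seg]; congr 1; ring
    · congr 1
      apply List.map_congr_left
      intro a _
      simp only [Function.comp]
      congr 1
      omega

lemma Tup_output (n k : ℕ) : (Tup n k).output (pUp n k) = xW n k := by
  rw [Transducer.output, Transducer.start, pUp]
  have h := Tup_run n k (2*n) 0 (by omega)
  rw [xW_eq]
  have hstart : (⟨0, (Tup n k).npos⟩ : Fin (Tup n k).n)
      = ⟨0, show (0:ℕ) < 2*n+1 by omega⟩ := rfl
  rw [hstart, h]
  congr 1
  apply List.map_congr_left
  intro a _
  rw [Nat.zero_add]

lemma stdEnc_Tup_le (n k : ℕ) :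
    (stdEnc (Tup n k)).length ≤ (2*n+1) * (4*k*(2*n+2) + 2*(2*n+2) + 4) := by
  rw [stdEnc, List.length_flatMap]
  have hb : ∀ x ∈ (List.finRange (Tup n k).n).map (List.length ∘ fun j =>
      encTransition j ((Tup n k).delta j false) ++ encTransition j ((Tup n k).delta j true)),
      x ≤ 4*k*(2*n+2) + 2*(2*n+2) + 4 := by
    intro x hx
    rw [List.mem_map] at hx
    obtain ⟨j, _, rfl⟩ := hx
    simp only [Function.comp, List.length_append]
    have hjlt : j.val < 2*n+1 := j.isLt
    have h1 : (encTransition j ((Tup n k).delta j false)).length ≤ 4*k*(2*n+2) + 2 := by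
      rw [Tup_delta_false, encTransition_self, diamond_length, Wb_length]
      have h3 : 2*k*(j.val+2) ≤ 2*k*(2*n+2) := by
        apply Nat.mul_le_mul_left
        omega
      have h4 : 4*k*(2*n+2) = 2*(2*k*(2*n+2)) := by ring
      omega
    have h2 : (encTransition j ((Tup n k).delta j true)).length ≤ 2*(2*n+2) + 2 := by
      refine le_trans (encTransition_length_le _ _) ?_
      have hsnd : (((Tup n k).delta j true).2).length = 0 := by
        show (if h : j.val + 1 < 2*n+1 then ((⟨j.val+1, h⟩ : Fin (2*n+1)), ([] : List Bool))
          else (j, [])).2.length = 0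
        split <;> rfl
      have hfst : (((Tup n k).delta j true).1).val ≤ 2*n := by
        show (if h : j.val + 1 < 2*n+1 then ((⟨j.val+1, h⟩ : Fin (2*n+1)), ([] : List Bool))
          else (j, [])).1.val ≤ 2*n
        split <;> simp <;> omega
      omega
    omega
  refine le_trans (List.sum_le_card_nsmul _ _ hb) ?_
  simp only [List.length_map, List.length_finRange, smul_eq_mul]
  show (Tup n k).n * _ ≤ _
  exact le_of_eq rfl

end Stmt0Aux

theorem stmt0 : ∀ n : ℕ, ∃ x : List Bool, x ∉ stdLle n := by
  intro n
  classical
  set A : ℕ := (2*n+1) * (4*(2*n+2)) + 2*n + 1 with hA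
  set Bc : ℕ := (2*n+1) * (2*(2*n+2) + 4) + 2*n with hBc
  set k : ℕ := (4*n+4) * (A + Bc) + 1 with hk
  refine ⟨Stmt0Aux.xW n k, ?_⟩
  intro hx
  obtain ⟨T, p, hout, hmin, hsize⟩ := hx
  set x := Stmt0Aux.xW n k with hxdef
  set σ := stdEnc T with hσ
  -- upper bound on the complexity of x
  have hub : Cstd x ≤ A * k + Bc := by
    have hmem : (stdEnc (Stmt0Aux.Tup n k)).length + (Stmt0Aux.pUp n k).length ∈ stdSizes x :=
      ⟨Stmt0Aux.Tup n k, Stmt0Aux.pUp n k, Stmt0Aux.Tup_output n k, rfl⟩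
    refine le_trans (Nat.sInf_le hmem) ?_
    have h1 := Stmt0Aux.stdEnc_Tup_le n k
    have h2 := Stmt0Aux.pUp_length n k
    rw [h2]
    have : (2*n+1) * (4*k*(2*n+2) + 2*(2*n+2) + 4) + (2*n*(k+1) + k) = A * k + Bc := by
      rw [hA, hBc]; ring
    omega
  -- minimality gives the complexity value
  have hc : (stdEnc T).length + p.length = Cstd x := hmin
  have hTn : 2 * T.n ≤ 2 * n := by
    have h1 := T.npos
    have h2 : T.n ≤ n := hsize
    omega
  -- pigeonhole: a marker index not "owned" by a single transition
  have hbadcard : ((Finset.Icc 1 (2*n+1)).filter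
      (fun i => ∃ t : Fin T.n × Bool, (Stmt0Aux.Iset (2*n+1) ((T.delta t.1 t.2).2)).card ≤ 1 ∧
        i ∈ Stmt0Aux.Iset (2*n+1) ((T.delta t.1 t.2).2))).card ≤ 2 * T.n := by
    have hsub : ((Finset.Icc 1 (2*n+1)).filter
        (fun i => ∃ t : Fin T.n × Bool, (Stmt0Aux.Iset (2*n+1) ((T.delta t.1 t.2).2)).card ≤ 1 ∧
          i ∈ Stmt0Aux.Iset (2*n+1) ((T.delta t.1 t.2).2))) ⊆
        Finset.image (fun t : Fin T.n × Bool =>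
          (Stmt0Aux.Iset (2*n+1) ((T.delta t.1 t.2).2)).sum id) Finset.univ := by
      intro i hi
      rw [Finset.mem_filter] at hi
      obtain ⟨hicc, t, hcard, himem⟩ := hi
      have hone : Stmt0Aux.Iset (2*n+1) ((T.delta t.1 t.2).2) = {i} := by
        apply Finset.eq_singleton_iff_unique_mem.mpr
        exact ⟨himem, fun b hb => Finset.card_le_one.mp hcard b hb i himem⟩
      rw [Finset.mem_image]
      exact ⟨t, Finset.mem_univ _, by rw [hone]; simp⟩
    have h1 := Finset.card_le_card hsub
    have h2 := Finset.card_image_le (s := (Finset.univ : Finset (Fin T.n × Bool)))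
      (f := fun t : Fin T.n × Bool => (Stmt0Aux.Iset (2*n+1) ((T.delta t.1 t.2).2)).sum id)
    have h3 : (Finset.univ : Finset (Fin T.n × Bool)).card = T.n * 2 := by simp
    omega
  have hex : ∃ i ∈ Finset.Icc 1 (2*n+1), i ∉ ((Finset.Icc 1 (2*n+1)).filter
      (fun i => ∃ t : Fin T.n × Bool, (Stmt0Aux.Iset (2*n+1) ((T.delta t.1 t.2).2)).card ≤ 1 ∧
        i ∈ Stmt0Aux.Iset (2*n+1) ((T.delta t.1 t.2).2))) := by
    by_contra hcon
    push_neg at hcon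
    have hss := Finset.card_le_card (fun i hi => hcon i hi)
    rw [Nat.card_Icc] at hss
    omega
  obtain ⟨istar, histar, hgood⟩ := hex
  rw [Finset.mem_Icc] at histar
  -- emissions of the minimal description
  obtain ⟨E, hE1, hE2, hE3⟩ := Stmt0Aux.run_emissions T p T.start
  rw [Transducer.output] at hout
  have hxE : x = E.flatten := by rw [← hout]; exact hE1
  -- lower bound on the number of marker occurrences
  have hlow : k * k ≤ Stmt0Aux.occ (Stmt0Aux.mark istar) x :=
    Stmt0Aux.occ_xW n k istar histar.1 histar.2
  -- upper bound
  have hmarkne : Stmt0Aux.mark istar ≠ [] := by simp [Stmt0Aux.mark]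
  have hup1 : Stmt0Aux.occ (Stmt0Aux.mark istar) x ≤
      (E.map (Stmt0Aux.occ (Stmt0Aux.mark istar))).sum + E.length * (istar + 2) := by
    rw [hxE]
    have := Stmt0Aux.occ_flatten_le (Stmt0Aux.mark istar) hmarkne E
    rw [Stmt0Aux.mark_length] at this
    exact this
  have hpoint : ∀ e ∈ E, Stmt0Aux.occ (Stmt0Aux.mark istar) e ≤
      σ.length * Stmt0Aux.Dm (2*n+1) e := by
    intro e he
    by_cases hocc : Stmt0Aux.occ (Stmt0Aux.mark istar) e = 0
    · simp [hocc]
    · have hinf : Stmt0Aux.mark istar <:+: e :=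
        Stmt0Aux.occ_pos_infix (Nat.pos_of_ne_zero hocc)
      obtain ⟨t, rfl⟩ := hE3 e he
      have hmemI : istar ∈ Stmt0Aux.Iset (2*n+1) ((T.delta t.1 t.2).2) := by
        rw [Stmt0Aux.Iset, Finset.mem_filter]
        exact ⟨Finset.mem_Icc.mpr histar, hinf⟩
      have hcard2 : 2 ≤ (Stmt0Aux.Iset (2*n+1) ((T.delta t.1 t.2).2)).card := by
        by_contra hlt
        push_neg at hlt
        exact hgood (Finset.mem_filter.mpr
          ⟨Finset.mem_Icc.mpr histar, t, by omega, hmemI⟩)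
      have hDm : 1 ≤ Stmt0Aux.Dm (2*n+1) ((T.delta t.1 t.2).2) := by
        unfold Stmt0Aux.Dm
        omega
      have hlen : Stmt0Aux.occ (Stmt0Aux.mark istar) ((T.delta t.1 t.2).2) ≤ σ.length := by
        have h1 := Stmt0Aux.occ_le_length (Stmt0Aux.mark istar) ((T.delta t.1 t.2).2)
        have h2 := Stmt0Aux.stdEnc_length_ge T t.1 t.2
        omega
      calc Stmt0Aux.occ (Stmt0Aux.mark istar) ((T.delta t.1 t.2).2) ≤ σ.length := hlen
        _ = σ.length * 1 := (mul_one _).symm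
        _ ≤ σ.length * Stmt0Aux.Dm (2*n+1) ((T.delta t.1 t.2).2) :=
            Nat.mul_le_mul_left _ hDm
  have hsum1 : (E.map (Stmt0Aux.occ (Stmt0Aux.mark istar))).sum ≤
      σ.length * (E.map (Stmt0Aux.Dm (2*n+1))).sum := by
    calc (E.map (Stmt0Aux.occ (Stmt0Aux.mark istar))).sum
        ≤ (E.map (fun e => σ.length * Stmt0Aux.Dm (2*n+1) e)).sum := List.sum_le_sum hpoint
      _ = σ.length * (E.map (Stmt0Aux.Dm (2*n+1))).sum := List.sum_map_mul_left _ _ _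
  have hDsum : (E.map (Stmt0Aux.Dm (2*n+1))).sum ≤ 2*n := by
    have hinfix : E.flatten <:+: ((Stmt0Aux.csL n k).map Stmt0Aux.Bk).flatten := by
      rw [← hxE]
      exact List.infix_refl _
    have h1 := Stmt0Aux.Dm_flatten (Stmt0Aux.csL_sorted n k) (2*n+1) E hinfix
    have h2 := Stmt0Aux.Dm_le (2*n+1) E.flatten
    omega
  -- combine the bounds
  have hσp : σ.length + p.length ≤ A * k + Bc := hc ▸ hub
  have hkpos : 1 ≤ k := by omega
  have hchain : k * k ≤ (2*n+3) * (A * k + Bc) := by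
    have h1 : Stmt0Aux.occ (Stmt0Aux.mark istar) x ≤
        σ.length * (2*n) + p.length * (2*n+3) := by
      have hEl : E.length = p.length := hE2
      have hi2 : istar + 2 ≤ 2*n+3 := by omega
      have h2 : E.length * (istar + 2) ≤ p.length * (2*n+3) := by
        rw [hEl]
        exact Nat.mul_le_mul_left _ hi2
      have h3 : σ.length * (E.map (Stmt0Aux.Dm (2*n+1))).sum ≤ σ.length * (2*n) :=
        Nat.mul_le_mul_left _ hDsum
      omega
    have h4 : σ.length * (2*n) + p.length * (2*n+3) ≤ (σ.length + p.length) * (2*n+3) := by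
      have := Nat.mul_le_mul_left σ.length (show 2*n ≤ 2*n+3 by omega)
      nlinarith
    have h5 : (σ.length + p.length) * (2*n+3) ≤ (A * k + Bc) * (2*n+3) :=
      Nat.mul_le_mul_right _ hσp
    calc k * k ≤ Stmt0Aux.occ (Stmt0Aux.mark istar) x := hlow
      _ ≤ σ.length * (2*n) + p.length * (2*n+3) := h1
      _ ≤ (σ.length + p.length) * (2*n+3) := h4
      _ ≤ (A * k + Bc) * (2*n+3) := h5
      _ = (2*n+3) * (A * k + Bc) := by ring
  have hcontra : (2*n+3) * (A * k + Bc) < k * k := by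
    have h1 : (2*n+3) * (A * k + Bc) ≤ (4*n+4) * (A * k + Bc) := by
      apply Nat.mul_le_mul_right
      omega
    have h2 : (4*n+4) * (A * k + Bc) ≤ ((4*n+4) * (A + Bc)) * k := by
      have hb : (4*n+4) * Bc ≤ (4*n+4) * Bc * k := Nat.le_mul_of_pos_right _ (by omega)
      calc (4*n+4) * (A * k + Bc) = (4*n+4) * A * k + (4*n+4) * Bc := by ring
        _ ≤ (4*n+4) * A * k + (4*n+4) * Bc * k := by omega
        _ = ((4*n+4) * (A + Bc)) * k := by ring
    have h3 : (4*n+4) * (A + Bc) < k := by omega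
    have h4 : ((4*n+4) * (A + Bc)) * k < k * k :=
      Nat.mul_lt_mul_of_lt_of_le h3 (le_refl k) (by omega)
    omega
  omega
end

section
/- For every n ≥ 1 there exists k_n ≥ 1 such that L_{≤n} is strictly included in L_{≤n+k_n} (with respect to the standard encoding S₀); in particular the state-size hierarchy with respect to the standard encoding is infinite. -/
/-! ### Auxiliary machinery for the proof of Statement 1 -/

namespace Stmt1

/-- Indicator function of the periodic word `(1 0^j 1^{L-1-j})^ω`. -/
def pw (L j t : ℕ) : Bool := decide (t % L = 0 ∨ j < t % L)

/-- Segment of length `len` of the periodic word. -/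
def seg (L j len : ℕ) : List Bool := (List.range len).map (pw L j)

@[simp] lemma length_seg (L j len : ℕ) : (seg L j len).length = len := by
  simp [seg]

lemma getElem_seg (L j len t : ℕ) (h : t < len) :
    (seg L j len)[t]'(by simpa using h) = pw L j t := by
  simp [seg]

lemma pw_add_left (L j a t : ℕ) (ha : a % L = 0) : pw L j (a + t) = pw L j t := by
  unfold pw
  congr 1
  rw [Nat.add_mod, ha, Nat.zero_add, Nat.mod_mod_of_dvd]
  exact dvd_refl L

lemma seg_add (L j a b : ℕ) (ha : a % L = 0) :
    seg L j (a + b) = seg L j a ++ seg L j b := by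
  unfold seg
  rw [List.range_add, List.map_append, List.map_map]
  congr 1
  apply List.map_congr_left
  intro t ht
  simp only [Function.comp_apply]
  exact pw_add_left L j a t ha

lemma flatten_replicate_seg (L j c k : ℕ) (hc : c % L = 0) :
    (List.replicate k (seg L j c)).flatten = seg L j (k * c) := by
  induction k with
  | zero => simp [seg]
  | succ k ih =>
      rw [List.replicate_succ, List.flatten_cons, ih, Nat.succ_mul, Nat.add_comm (k*c) c,
        seg_add L j c (k*c) hc]

end Stmt1
namespace Stmt1

/-! ### Lengths of encodings -/

lemma length_dagger : ∀ v : List Bool, (dagger v).length = 2 * v.length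
  | [] => rfl
  | [a] => rfl
  | a :: b :: v => by
      rw [dagger, List.length_cons, List.length_cons, List.length_cons,
        length_dagger (b :: v)]
      simp [List.length_cons]; ring

@[simp] lemma length_diamond (v : List Bool) :
    (diamond v).length = 2 * v.length + 2 := by
  rw [diamond, List.length_map, length_dagger]
  simp [Nat.mul_add]

lemma length_binRep_le (k : ℕ) : (binRep k).length ≤ k := by
  rw [binRep, List.length_reverse]
  calc (Nat.bits k).length = Nat.size k := Nat.size_eq_bits_len k
  _ ≤ k := by
      rcases Nat.eq_zero_or_pos k with h | h
      · simp [h]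
      · exact Nat.size_le.2 (Nat.lt_two_pow_self (n := k))

lemma length_encTransition_le {n : ℕ} (j : Fin n) (t : Fin n × List Bool) :
    (encTransition j t).length ≤ 2 * t.1.val + 2 + (2 * t.2.length + 2) := by
  rw [encTransition, List.length_append, length_diamond]
  have : (if t.1 = j then ([] : List Bool) else dagger (binRep (t.1.val + 1))).length
      ≤ 2 * t.1.val + 2 := by
    split
    · simp
    · rw [length_dagger]
      have := length_binRep_le (t.1.val + 1)
      omega
  omega

lemma diamond_le_encTransition {n : ℕ} (j : Fin n) (t : Fin n × List Bool) :
    2 * t.2.length + 2 ≤ (encTransition j t).length := by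
  rw [encTransition, List.length_append, length_diamond]
  omega

lemma length_stdEnc_eq (T : Transducer) :
    (stdEnc T).length = ((List.finRange T.n).map (fun j =>
      (encTransition j (T.delta j false)).length +
      (encTransition j (T.delta j true)).length)).sum := by
  rw [stdEnc, List.length_flatMap]
  congr 1
  apply List.map_congr_left
  intro j _
  simp [List.length_append]

/-- Every transition output is paid for in the standard encoding. -/
lemma output_le_stdEnc (T : Transducer) (q : Fin T.n) (a : Bool) :
    2 * (T.delta q a).2.length + 2 ≤ (stdEnc T).length := by
  rw [length_stdEnc_eq]
  have hmem : (encTransition q (T.delta q false)).length +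
      (encTransition q (T.delta q true)).length ∈
      (List.finRange T.n).map (fun j =>
        (encTransition j (T.delta j false)).length +
        (encTransition j (T.delta j true)).length) :=
    List.mem_map_of_mem (List.mem_finRange q)
  have h1 := List.single_le_sum (l := (List.finRange T.n).map (fun j =>
        (encTransition j (T.delta j false)).length +
        (encTransition j (T.delta j true)).length)) (fun x _ => Nat.zero_le x) _ hmem
  have h2 := diamond_le_encTransition q (T.delta q false)
  have h3 := diamond_le_encTransition q (T.delta q true)
  cases a <;> omega

/-! ### Run decomposition into chunks -/

lemma run_append (T : Transducer) (q : Fin T.n) (p₁ p₂ : List Bool) :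
    T.run q (p₁ ++ p₂) = ((T.run (T.run q p₁).1 p₂).1,
      (T.run q p₁).2 ++ (T.run (T.run q p₁).1 p₂).2) := by
  induction p₁ generalizing q with
  | nil => simp [Transducer.run]
  | cons a p₁ ih => simp [Transducer.run, ih]

lemma run_chunks (T : Transducer) (q : Fin T.n) (p : List Bool) :
    ∃ ws : List (List Bool), (T.run q p).2 = ws.flatten ∧ ws.length = p.length ∧
      ∀ w ∈ ws, ∃ q' a, w = (T.delta q' a).2 := by
  induction p generalizing q with
  | nil => exact ⟨[], rfl, rfl, by simp⟩
  | cons a p ih =>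
      obtain ⟨ws, h1, h2, h3⟩ := ih (T.delta q a).1
      refine ⟨(T.delta q a).2 :: ws, ?_, by simp [h2], ?_⟩
      · simp [Transducer.run, h1]
      · intro w hw
        rcases List.mem_cons.1 hw with h | h
        · exact ⟨q, a, h⟩
        · exact h3 w h

end Stmt1
namespace Stmt1

/-! ### Covering lemmas -/

lemma cover0 (E K : ℕ) : ∀ (ws : List (List Bool)) (B : ℕ) (sg : List Bool),
    B ≤ ws.flatten.length → ws.flatten.take B <:+: sg →
    (∀ w ∈ ws, w <:+: sg → w.length ≤ K) → (∀ w ∈ ws, w.length ≤ E) →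
    B ≤ E + ws.length * K := by
  intro ws
  induction ws with
  | nil => intro B sg hB _ _ _; simp at hB; omega
  | cons w ws ih =>
      intro B sg hB hseg hshort hE
      by_cases hw : B ≤ w.length
      · have := hE w (List.mem_cons_self)
        have : B ≤ E := le_trans hw this
        omega
      · push_neg at hw
        have hwB : w.length ≤ B := le_of_lt hw
        have htake : (w :: ws).flatten.take B = w ++ ws.flatten.take (B - w.length) := by
          rw [List.flatten_cons, List.take_append,
            List.take_of_length_le (by omega)]
        have hwinf : w <:+: sg := by
          refine List.IsInfix.trans ?_ hseg
          rw [htake]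
          exact (List.prefix_append w _).isInfix

        have hK := hshort w (List.mem_cons_self) hwinf
        have hrec : B - w.length ≤ E + ws.length * K := by
          apply ih (B - w.length) sg
          · rw [List.flatten_cons, List.length_append] at hB; omega
          · refine List.IsInfix.trans ?_ hseg
            rw [htake]
            exact (List.suffix_append w _).isInfix
          · intro w' hw' h'; exact hshort w' (List.mem_cons_of_mem w hw') h'
          · intro w' hw'; exact hE w' (List.mem_cons_of_mem w hw')
        calc B = w.length + (B - w.length) := by omega
        _ ≤ K + (E + ws.length * K) := Nat.add_le_add hK hrec
        _ = E + (ws.length + 1) * K := by ring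
        _ = E + (w :: ws).length * K := by simp

lemma cover1 (E K : ℕ) : ∀ (ws : List (List Bool)) (A B : ℕ) (sg : List Bool),
    A ≤ B → B ≤ ws.flatten.length → ((ws.flatten.drop A).take (B - A)) <:+: sg →
    (∀ w ∈ ws, w <:+: sg → w.length ≤ K) → (∀ w ∈ ws, w.length ≤ E) →
    B - A ≤ 2 * E + ws.length * K := by
  intro ws
  induction ws with
  | nil => intro A B sg hAB hB _ _ _; simp at hB; omega
  | cons w ws ih =>
      intro A B sg hAB hB hseg hshort hE
      have hBlen : B ≤ w.length + ws.flatten.length := by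
        simpa [List.flatten_cons] using hB
      by_cases hA : w.length ≤ A
      · have h1 : (w :: ws).flatten.drop A = ws.flatten.drop (A - w.length) := by
          rw [List.flatten_cons, List.drop_append,
            List.drop_of_length_le hA, List.nil_append]
        have hrec := ih (A - w.length) (B - w.length) sg (by omega) (by omega)
          (by rw [show B - w.length - (A - w.length) = B - A by omega, ← h1]; exact hseg)
          (fun w' h' => hshort w' (List.mem_cons_of_mem w h'))
          (fun w' h' => hE w' (List.mem_cons_of_mem w h'))
        have : B - w.length - (A - w.length) = B - A := by omega
        rw [this] at hrec
        calc B - A ≤ 2 * E + ws.length * K := hrec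
        _ ≤ 2 * E + (w :: ws).length * K := by simp [List.length_cons]; nlinarith [Nat.zero_le K]
      · push_neg at hA
        by_cases hBw : B ≤ w.length
        · have := hE w (List.mem_cons_self)
          have : B - A ≤ E := by omega
          omega
        · push_neg at hBw
          have hdrop : (w :: ws).flatten.drop A = w.drop A ++ ws.flatten := by
            rw [List.flatten_cons, List.drop_append,
              show A - w.length = 0 by omega, List.drop_zero]
          have h1 : (w.drop A).take (B - A) = w.drop A :=
            List.take_of_length_le (by rw [List.length_drop]; omega)
          have h2 : B - A - (w.drop A).length = B - w.length := by
            rw [List.length_drop]; omega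
          have htake : ((w :: ws).flatten.drop A).take (B - A)
              = w.drop A ++ ws.flatten.take (B - w.length) := by
            rw [hdrop, List.take_append, h1, h2]
          have hsub : ws.flatten.take (B - w.length) <:+: sg := by
            refine List.IsInfix.trans ?_ hseg
            rw [htake]
            exact (List.suffix_append _ _).isInfix
          have hrec := cover0 E K ws (B - w.length) sg (by omega) hsub
            (fun w' h' => hshort w' (List.mem_cons_of_mem w h'))
            (fun w' h' => hE w' (List.mem_cons_of_mem w h'))
          have hEw := hE w (List.mem_cons_self)
          calc B - A = (w.length - A) + (B - w.length) := by omega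
          _ ≤ E + (E + ws.length * K) := Nat.add_le_add (by omega) hrec
          _ ≤ 2 * E + (w :: ws).length * K := by simp [List.length_cons]; nlinarith [Nat.zero_le K]

end Stmt1
namespace Stmt1

lemma mod_shift (x s Lv r : ℕ) (hx : x % Lv = r) (hs : r + s < Lv) :
    (x + s) % Lv = r + s := by
  rw [Nat.add_mod, hx, Nat.mod_eq_of_lt (show s < Lv by omega), Nat.mod_eq_of_lt hs]

/-- The core combinatorial fact: a common factor of length `≥ 2L` of the two
periodic words determines the parameter. -/
lemma core (Lv j₁ j₂ a c len : ℕ) (hj₁ : 1 ≤ j₁) (hj₁L : j₁ + 1 < Lv)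
    (hj₂ : 1 ≤ j₂) (hj₂L : j₂ + 1 < Lv) (hlen : 2 * Lv ≤ len)
    (h : ∀ i, i < len → pw Lv j₁ (a + i) = pw Lv j₂ (c + i)) : j₁ = j₂ := by
  have hL : 0 < Lv := by omega
  obtain ⟨t, htlt, ht⟩ : ∃ t, t < Lv ∧ (a + t) % Lv = 0 := by
    by_cases hz : a % Lv = 0
    · exact ⟨0, hL, by simpa using hz⟩
    · have h1 : a % Lv < Lv := Nat.mod_lt _ hL
      refine ⟨Lv - a % Lv, by omega, ?_⟩
      rw [Nat.add_mod, Nat.mod_eq_of_lt (show Lv - a % Lv < Lv by omega),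
        show a % Lv + (Lv - a % Lv) = Lv by omega, Nat.mod_self]
  have key : ∀ s, s ≤ j₁ + 1 → pw Lv j₂ (c + (t + s)) = pw Lv j₁ (a + (t + s)) :=
    fun s hs => (h (t + s) (by omega)).symm
  have eS : ∀ s, 1 ≤ s → s ≤ j₁ → pw Lv j₁ (a + (t + s)) = false := by
    intro s h1 h2
    have hm : (a + (t + s)) % Lv = s := by
      rw [← Nat.add_assoc]
      simpa using mod_shift (a + t) s Lv 0 ht (by omega)
    simp [pw, hm]
    omega
  have eT : pw Lv j₁ (a + (t + (j₁ + 1))) = true := by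
    have hm : (a + (t + (j₁ + 1))) % Lv = j₁ + 1 := by
      rw [← Nat.add_assoc]
      simpa using mod_shift (a + t) (j₁ + 1) Lv 0 ht (by omega)
    simp [pw, hm]
  have hρlt : (c + t) % Lv < Lv := Nat.mod_lt _ hL
  have f1 : pw Lv j₂ (c + t) = true := by
    have h0 := key 0 (by omega)
    simp only [Nat.add_zero] at h0
    rw [h0]
    simp [pw, ht]
  have hcase : (c + t) % Lv = 0 ∨ j₂ < (c + t) % Lv := by
    simpa [pw] using f1
  rcases hcase with hρ | hρ
  · -- aligned case
    have g1 : j₁ ≤ j₂ := by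
      have hm : (c + (t + j₁)) % Lv = j₁ := by
        rw [← Nat.add_assoc]
        simpa using mod_shift (c + t) j₁ Lv 0 hρ (by omega)
      have := (key j₁ (by omega)).trans (eS j₁ hj₁ le_rfl)
      simp [pw, hm] at this
      omega
    have hm : (c + (t + (j₁ + 1))) % Lv = j₁ + 1 := by
      rw [← Nat.add_assoc]
      simpa using mod_shift (c + t) (j₁ + 1) Lv 0 hρ (by omega)
    have := (key (j₁ + 1) le_rfl).trans eT
    simp [pw, hm] at this
    omega
  · -- misaligned case: contradiction at offset 1
    exfalso
    by_cases hw : (c + t) % Lv + 1 = Lv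
    · have hm : (c + (t + 1)) % Lv = 0 := by
        rw [← Nat.add_assoc, Nat.add_mod, Nat.mod_eq_of_lt (show 1 < Lv by omega), hw,
          Nat.mod_self]
      have := (key 1 (by omega)).trans (eS 1 le_rfl hj₁)
      simp [pw, hm] at this
    · have hm : (c + (t + 1)) % Lv = (c + t) % Lv + 1 := by
        rw [← Nat.add_assoc]
        exact mod_shift (c + t) 1 Lv _ rfl (by omega)
      have := (key 1 (by omega)).trans (eS 1 le_rfl hj₁)
      simp [pw, hm] at this
      omega

end Stmt1
namespace Stmt1

lemma infix_seg (Lv j N : ℕ) (w : List Bool) (h : w <:+: seg Lv j N) :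
    ∃ d, ∀ i, i < w.length → w[i]? = some (pw Lv j (d + i)) := by
  obtain ⟨s, u, hsu⟩ := h
  refine ⟨s.length, fun i hi => ?_⟩
  have hN : s.length + w.length + u.length = N := by
    have := congrArg List.length hsu
    simp at this
    omega
  have h1 : (s ++ w ++ u)[s.length + i]? = w[i]? := by
    rw [List.append_assoc, List.getElem?_append_right (by omega),
      show s.length + i - s.length = i by omega, List.getElem?_append_left (by omega)]
  rw [← h1, hsu]
  have hk : s.length + i < N := by omega
  simp only [seg, List.getElem?_map]
  rw [List.getElem?_range hk]
  rfl

lemma infix_inj (Lv j₁ j₂ N₁ N₂ : ℕ) (w : List Bool) (hj₁ : 1 ≤ j₁)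
    (hj₁L : j₁ + 1 < Lv) (hj₂ : 1 ≤ j₂) (hj₂L : j₂ + 1 < Lv)
    (hwlen : 2 * Lv ≤ w.length)
    (h1 : w <:+: seg Lv j₁ N₁) (h2 : w <:+: seg Lv j₂ N₂) : j₁ = j₂ := by
  obtain ⟨a, ha⟩ := infix_seg _ _ _ _ h1
  obtain ⟨c, hc⟩ := infix_seg _ _ _ _ h2
  refine core Lv j₁ j₂ a c w.length hj₁ hj₁L hj₂ hj₂L hwlen ?_
  intro i hi
  exact Option.some.inj ((ha i hi).symm.trans (hc i hi))

/-- Extracting region `i` out of the flattening of equally long regions. -/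
lemma drop_take_flatten : ∀ (R : List (List Bool)) (M i : ℕ)
    (_ : ∀ r ∈ R, r.length = M) (hi : i < R.length),
    ((R.flatten.drop (i * M)).take M) = R[i]'hi := by
  intro R
  induction R with
  | nil => intro M i _ hi; simp at hi
  | cons r R ih =>
      intro M i hlen hi
      cases i with
      | zero =>
          simp only [Nat.zero_mul, List.drop_zero, List.flatten_cons]
          rw [List.take_append, List.take_of_length_le
            (by rw [hlen r (List.mem_cons_self)]),
            show M - r.length = 0 by rw [hlen r (List.mem_cons_self)]; omega]
          simp
      | succ i =>
          have hr := hlen r (List.mem_cons_self)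
          have h1 : (r :: R).flatten.drop ((i + 1) * M)
              = R.flatten.drop (i * M) := by
            rw [List.flatten_cons, List.drop_append,
              List.drop_of_length_le
                (by rw [hr, Nat.succ_mul]; exact Nat.le_add_left M (i * M))]
            simp only [List.nil_append]
            congr 1
            rw [hr, Nat.succ_mul]
            exact Nat.add_sub_cancel (i * M) M
          rw [h1, ih M i (fun r h => hlen r (List.mem_cons_of_mem _ h)) (by simpa using hi)]
          simp

/-- The finite set of transition outputs of a transducer. -/
def outs (T : Transducer) : Finset (List Bool) :=
  Finset.image (fun qa : Fin T.n × Bool => (T.delta qa.1 qa.2).2) Finset.univ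

lemma card_outs_le (T : Transducer) : (outs T).card ≤ 2 * T.n := by
  calc (outs T).card ≤ Fintype.card (Fin T.n × Bool) := by
        apply le_trans (Finset.card_image_le)
        simp
  _ = 2 * T.n := by simp [Fintype.card_prod]; ring

end Stmt1
namespace Stmt1

/-- block length -/
def Lv (n : ℕ) : ℕ := 2 * n + 3

/-- region length -/
def M (n m : ℕ) : ℕ := m * (m * Lv n)

/-- the regions: `u_{i+1}^{m²}` for `i = 0, …, 2n` -/
def regions (n m : ℕ) : List (List Bool) :=
  (List.range (2 * n + 1)).map fun i => seg (Lv n) (i + 1) (M n m)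

/-- the hard string -/
def X (n m : ℕ) : List Bool := (regions n m).flatten

lemma length_regions (n m : ℕ) : ∀ r ∈ regions n m, r.length = M n m := by
  intro r hr
  simp only [regions, List.mem_map] at hr
  obtain ⟨i, _, rfl⟩ := hr
  simp

lemma length_X (n m : ℕ) : (X n m).length = (2 * n + 1) * M n m := by
  rw [X, List.length_flatten, regions, List.map_map]
  have h1 : (List.length ∘ fun i => seg (Lv n) (i + 1) (M n m)) = fun _ => M n m :=
    funext fun i => by simp
  rw [h1, List.map_const', List.sum_replicate, List.length_range, smul_eq_mul]

lemma run_cons (T : Transducer) (q : Fin T.n) (a : Bool) (x : List Bool) :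
    T.run q (a :: x) = ((T.run (T.delta q a).1 x).1,
      (T.delta q a).2 ++ (T.run (T.delta q a).1 x).2) := rfl

/-- The witness transducer with `2n+1` states. -/
def TW (n m : ℕ) : Transducer where
  n := 2 * n + 1
  npos := by omega
  delta := fun j b =>
    match b with
    | false => (j, seg (Lv n) (j.val + 1) (m * Lv n))
    | true => if h : j.val + 1 < 2 * n + 1 then (⟨j.val + 1, h⟩, []) else (j, [])

lemma TW_run_zeros (n m : ℕ) (q : Fin (TW n m).n) (k : ℕ) :
    (TW n m).run q (List.replicate k false)
      = (q, seg (Lv n) (q.val + 1) (k * (m * Lv n))) := by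
  induction k with
  | zero => simp [Transducer.run, seg]
  | succ k ih =>
      have hd : (TW n m).delta q false = (q, seg (Lv n) (q.val + 1) (m * Lv n)) := rfl
      rw [List.replicate_succ]
      simp only [run_cons, hd, ih]
      simp only [Prod.mk.injEq, true_and]
      rw [← seg_add (Lv n) (q.val + 1) (m * Lv n) (k * (m * Lv n)) (Nat.mul_mod_left m (Lv n))]
      congr 1
      ring

/-- The input word: `(0^m 1)^{2n} 0^m`. -/
def pblock (m : ℕ) : List Bool := List.replicate m false ++ [true]

def pW (n m : ℕ) : List Bool :=
  (List.replicate (2 * n) (pblock m)).flatten ++ List.replicate m false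

lemma length_pW (n m : ℕ) : (pW n m).length = 2 * n * (m + 1) + m := by
  simp [pW, pblock, List.length_flatten, Function.comp]
  try ring
  try omega

lemma TW_run_main (n m : ℕ) : ∀ (d s : ℕ) (_ : s + d = 2 * n),
    (TW n m).run ⟨s, by change _ < 2 * n + 1; omega⟩
      ((List.replicate d (pblock m)).flatten ++ List.replicate m false)
    = (⟨2 * n, by change _ < 2 * n + 1; omega⟩,
      ((List.range (d + 1)).map fun i => seg (Lv n) (s + i + 1) (M n m)).flatten) := by
  intro d
  induction d with
  | zero =>
      intro s h
      simp only [List.replicate_zero, List.flatten_nil, List.nil_append]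
      rw [TW_run_zeros]
      have hs : s = 2 * n := by omega
      subst hs
      simp [M, List.range_succ]
  | succ d ih =>
      intro s h
      have hlt : s + 1 < 2 * n + 1 := by omega
      have h2 : (TW n m).delta ⟨s, by change _ < 2 * n + 1; omega⟩ true
          = (⟨s + 1, hlt⟩, []) := by
        show (if h : s + 1 < 2 * n + 1 then _ else _) = _
        exact dif_pos hlt
      have h3 := ih (s + 1) (by omega)
      simp only [pblock] at h3
      rw [List.replicate_succ, List.flatten_cons, pblock, List.append_assoc,
        List.append_assoc, List.singleton_append]
      rw [run_append, TW_run_zeros]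
      simp only [run_cons, h2, h3]
      simp only [List.nil_append, Prod.mk.injEq, true_and]
      rw [List.range_succ_eq_map (n := d + 1)]
      simp only [List.map_cons, List.flatten_cons, List.map_map]
      congr 1
      congr 1
      apply List.map_congr_left
      intro i _
      simp only [Function.comp_apply]
      refine congrArg (fun a => seg (Lv n) a (M n m)) ?_
      omega

lemma TW_output (n m : ℕ) : (TW n m).output (pW n m) = X n m := by
  have h := TW_run_main n m (2 * n) 0 (by omega)
  rw [Transducer.output, pW]
  have hstart : (TW n m).start = ⟨0, by change _ < 2 * n + 1; omega⟩ := rfl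
  rw [hstart, h]
  rw [X, regions]
  show (List.map _ _).flatten = _
  congr 1
  apply List.map_congr_left
  intro i _
  refine congrArg (fun a => seg (Lv n) a (M n m)) ?_
  omega

end Stmt1
namespace Stmt1

lemma encTransition_self {k : ℕ} (j : Fin k) (t : Fin k × List Bool) (h : t.1 = j) :
    (encTransition j t).length = 2 * t.2.length + 2 := by
  rw [encTransition, if_pos h]
  simp

lemma stdEnc_TW_le (n m : ℕ) :
    (stdEnc (TW n m)).length ≤ (2 * n + 1) * (2 * (m * Lv n) + 4 * n + 8) := by
  rw [length_stdEnc_eq]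
  have hcard : ((List.finRange (TW n m).n).map (fun j =>
      (encTransition j ((TW n m).delta j false)).length +
      (encTransition j ((TW n m).delta j true)).length)).length = 2 * n + 1 := by
    simp [TW]
  calc ((List.finRange (TW n m).n).map _).sum
      ≤ ((List.finRange (TW n m).n).map (fun j =>
          (encTransition j ((TW n m).delta j false)).length +
          (encTransition j ((TW n m).delta j true)).length)).length
        • (2 * (m * Lv n) + 4 * n + 8) := by
        apply List.sum_le_card_nsmul
        intro x hx
        simp only [List.mem_map] at hx
        obtain ⟨j, _, rfl⟩ := hx
        have hfalse : (encTransition j ((TW n m).delta j false)).length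
            = 2 * (m * Lv n) + 2 := by
          have hd : (TW n m).delta j false = (j, seg (Lv n) (j.val + 1) (m * Lv n)) := rfl
          rw [hd, encTransition_self j _ rfl]
          simp
        have htrue2 : ((TW n m).delta j true).2.length = 0 := by
          show (if h : (j : Fin (TW n m).n).val + 1 < 2 * n + 1 then
            ((⟨j.val + 1, h⟩ : Fin (TW n m).n), ([] : List Bool)) else (j, [])).2.length = 0
          split <;> rfl
        have htrue : (encTransition j ((TW n m).delta j true)).length ≤ 4 * n + 6 := by
          have h1 := length_encTransition_le j ((TW n m).delta j true)
          have h2 : (((TW n m).delta j true).1 : Fin (TW n m).n).val < 2 * n + 1 :=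
            (((TW n m).delta j true).1).isLt
          omega
        omega
  _ = (2 * n + 1) * (2 * (m * Lv n) + 4 * n + 8) := by
        rw [hcard, smul_eq_mul]

lemma chunk_mem_outs (T : Transducer) (w : List Bool) (h : ∃ q a, w = (T.delta q a).2) :
    w ∈ outs T := by
  obtain ⟨q, a, rfl⟩ := h
  exact Finset.mem_image.2 ⟨(q, a), Finset.mem_univ _, rfl⟩

lemma exists_quiet_region (n m : ℕ) (T : Transducer) (hT : T.n ≤ n) :
    ∃ i₀, i₀ < 2 * n + 1 ∧ ∀ w ∈ outs T, 2 * Lv n ≤ w.length →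
      ¬ w <:+: seg (Lv n) (i₀ + 1) (M n m) := by
  by_contra hcon
  push_neg at hcon
  have hcon' : ∀ i : Fin (2 * n + 1), ∃ w, w ∈ outs T ∧ 2 * Lv n ≤ w.length ∧
      w <:+: seg (Lv n) (i.val + 1) (M n m) := by
    intro i
    obtain ⟨w, hw1, hw2, hw3⟩ := hcon i.val i.isLt
    exact ⟨w, hw1, hw2, hw3⟩
  choose f hf1 hf2 hf3 using hcon'
  have hinj : Function.Injective f := by
    intro i j hij
    have heq : (i : ℕ) + 1 = (j : ℕ) + 1 := by
      refine infix_inj (Lv n) (i.val + 1) (j.val + 1) (M n m) (M n m) (f i)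
        (by omega) (by simp only [Lv]; omega) (by omega) (by simp only [Lv]; omega)
        (hf2 i) (hf3 i) ?_
      rw [hij]
      exact hf3 j
    exact Fin.ext (by omega)
  have hcard : (Finset.univ : Finset (Fin (2 * n + 1))).card ≤ (outs T).card :=
    Finset.card_le_card_of_injOn f (fun i _ => hf1 i) hinj.injOn
  rw [Finset.card_univ, Fintype.card_fin] at hcard
  have := card_outs_le T
  omega

lemma lower (n m : ℕ) (T : Transducer) (p : List Bool) (hT : T.n ≤ n)
    (hout : T.output p = X n m)
    (hbig : (2 * Lv n + 2) * ((stdEnc T).length + p.length) < M n m) : False := by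
  obtain ⟨i₀, hi₀, hquiet⟩ := exists_quiet_region n m T hT
  obtain ⟨ws, hflat, hlen, hmem⟩ := run_chunks T T.start p
  rw [Transducer.output] at hout
  have hX : ws.flatten = X n m := by rw [← hflat]; exact hout
  have hflatlen : ws.flatten.length = (2 * n + 1) * M n m := by rw [hX, length_X]
  have hregget : (regions n m)[i₀]'(by simp [regions]; omega) = seg (Lv n) (i₀ + 1) (M n m) := by
    simp [regions]
  have hseg : ((ws.flatten.drop (i₀ * M n m)).take (M n m)) = seg (Lv n) (i₀ + 1) (M n m) := by
    rw [hX, X]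
    rw [drop_take_flatten (regions n m) (M n m) i₀ (length_regions n m)
      (by simp [regions]; omega)]
    exact hregget
  have hB : i₀ * M n m + M n m ≤ ws.flatten.length := by
    rw [hflatlen]
    calc i₀ * M n m + M n m = (i₀ + 1) * M n m := by ring
    _ ≤ (2 * n + 1) * M n m := Nat.mul_le_mul_right _ (by omega)
  have hcov := cover1 ((stdEnc T).length) (2 * Lv n) ws (i₀ * M n m) (i₀ * M n m + M n m)
    (seg (Lv n) (i₀ + 1) (M n m)) (Nat.le_add_right _ _) hB
    (by rw [Nat.add_sub_cancel_left, hseg])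
    (by
      intro w hw hinf
      by_contra hlong
      exact hquiet w (chunk_mem_outs T w (hmem w hw)) (by omega) hinf)
    (by
      intro w hw
      obtain ⟨q, a, rfl⟩ := hmem w hw
      have := output_le_stdEnc T q a
      omega)
  rw [Nat.add_sub_cancel_left, hlen] at hcov
  -- hcov : M n m ≤ 2 * (stdEnc T).length + p.length * (2 * Lv n)
  have : 2 * (stdEnc T).length + p.length * (2 * Lv n)
      ≤ (2 * Lv n + 2) * ((stdEnc T).length + p.length) := by nlinarith [Nat.zero_le (Lv n)]
  omega

end Stmt1
namespace Stmt1

/-- The chosen repetition parameter. -/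
def mch (n : ℕ) : ℕ := 20 * Lv n * Lv n

lemma numeric (L : ℕ) (hL : 5 ≤ L) :
    3 * L * (L * (2 * (20 * L * L * L) + 2 * L + 2) + (L * (20 * L * L + 1) + 20 * L * L))
      < 20 * L * L * (20 * L * L * L) := by
  have h1 : 1 ≤ L := by omega
  have p2 : L ^ 2 ≤ L ^ 5 := Nat.pow_le_pow_right h1 (by norm_num)
  have p3 : L ^ 3 ≤ L ^ 5 := Nat.pow_le_pow_right h1 (by norm_num)
  have p4 : L ^ 4 ≤ L ^ 5 := Nat.pow_le_pow_right h1 (by norm_num)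
  have p5 : 1 ≤ L ^ 5 := Nat.one_le_pow _ _ (by omega)
  nlinarith [p2, p3, p4, p5]

lemma key_bound (n : ℕ) (hn : 1 ≤ n) :
    (2 * Lv n + 2) * ((2 * n + 1) * (2 * (mch n * Lv n) + 4 * n + 8)
      + (2 * n * (mch n + 1) + mch n)) < M n (mch n) := by
  have hL : Lv n = 2 * n + 3 := rfl
  have e1 : (2 * n + 1) * (2 * (mch n * Lv n) + 4 * n + 8)
      ≤ Lv n * (2 * (mch n * Lv n) + 2 * Lv n + 2) :=
    Nat.mul_le_mul (by omega) (by omega)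
  have e2 : 2 * n * (mch n + 1) + mch n ≤ Lv n * (mch n + 1) + mch n :=
    Nat.add_le_add_right (Nat.mul_le_mul_right _ (by omega)) (mch n)
  have e3 : (2 * Lv n + 2) * ((2 * n + 1) * (2 * (mch n * Lv n) + 4 * n + 8)
        + (2 * n * (mch n + 1) + mch n))
      ≤ 3 * Lv n * (Lv n * (2 * (mch n * Lv n) + 2 * Lv n + 2)
        + (Lv n * (mch n + 1) + mch n)) :=
    Nat.mul_le_mul (by omega) (Nat.add_le_add e1 e2)
  have e4 : 3 * Lv n * (Lv n * (2 * (mch n * Lv n) + 2 * Lv n + 2)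
        + (Lv n * (mch n + 1) + mch n)) < mch n * (mch n * Lv n) := by
    have h5 : 5 ≤ Lv n := by omega
    have := numeric (Lv n) h5
    simp only [mch]
    calc 3 * Lv n * (Lv n * (2 * (20 * Lv n * Lv n * Lv n) + 2 * Lv n + 2)
          + (Lv n * (20 * Lv n * Lv n + 1) + 20 * Lv n * Lv n))
        < 20 * Lv n * Lv n * (20 * Lv n * Lv n * Lv n) := this
      _ = 20 * Lv n * Lv n * (20 * Lv n * Lv n * Lv n) := rfl
  have hM : M n (mch n) = mch n * (mch n * Lv n) := rfl
  calc (2 * Lv n + 2) * ((2 * n + 1) * (2 * (mch n * Lv n) + 4 * n + 8)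
        + (2 * n * (mch n + 1) + mch n))
      ≤ 3 * Lv n * (Lv n * (2 * (mch n * Lv n) + 2 * Lv n + 2)
        + (Lv n * (mch n + 1) + mch n)) := e3
    _ < mch n * (mch n * Lv n) := e4
    _ = M n (mch n) := hM.symm

end Stmt1

theorem stmt1 : ∀ n : ℕ, 1 ≤ n → ∃ k : ℕ, 1 ≤ k ∧ stdLle n ⊂ stdLle (n + k) := by
  intro n hn
  have hmemU : ((stdEnc (Stmt1.TW n (Stmt1.mch n))).length + (Stmt1.pW n (Stmt1.mch n)).length)
      ∈ stdSizes (Stmt1.X n (Stmt1.mch n)) :=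
    ⟨Stmt1.TW n (Stmt1.mch n), Stmt1.pW n (Stmt1.mch n), Stmt1.TW_output n (Stmt1.mch n), rfl⟩
  have hub : Cstd (Stmt1.X n (Stmt1.mch n))
      ≤ (2 * n + 1) * (2 * (Stmt1.mch n * Stmt1.Lv n) + 4 * n + 8)
        + (2 * n * (Stmt1.mch n + 1) + Stmt1.mch n) := by
    refine le_trans (Nat.sInf_le hmemU) ?_
    have h1 := Stmt1.stdEnc_TW_le n (Stmt1.mch n)
    have h2 := Stmt1.length_pW n (Stmt1.mch n)
    exact Nat.add_le_add h1 (le_of_eq h2)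
  have hnotin : Stmt1.X n (Stmt1.mch n) ∉ stdLle n := by
    rintro ⟨T, p, hout, hcost, hsize⟩
    refine Stmt1.lower n (Stmt1.mch n) T p hsize hout ?_
    calc (2 * Stmt1.Lv n + 2) * ((stdEnc T).length + p.length)
        = (2 * Stmt1.Lv n + 2) * Cstd (Stmt1.X n (Stmt1.mch n)) := by rw [hcost]
      _ ≤ (2 * Stmt1.Lv n + 2) * ((2 * n + 1) * (2 * (Stmt1.mch n * Stmt1.Lv n) + 4 * n + 8)
          + (2 * n * (Stmt1.mch n + 1) + Stmt1.mch n)) := Nat.mul_le_mul_left _ hub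
      _ < Stmt1.M n (Stmt1.mch n) := Stmt1.key_bound n hn
  have hne : (stdSizes (Stmt1.X n (Stmt1.mch n))).Nonempty := ⟨_, hmemU⟩
  obtain ⟨T₀, p₀, hout₀, hc₀⟩ := Nat.sInf_mem hne
  have hsub : stdLle n ⊆ stdLle (n + T₀.size) := by
    rintro y ⟨T, p, h1, h2, h3⟩
    exact ⟨T, p, h1, h2, by omega⟩
  have hxin : Stmt1.X n (Stmt1.mch n) ∈ stdLle (n + T₀.size) :=
    ⟨T₀, p₀, hout₀, hc₀.symm, Nat.le_add_left _ _⟩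
  exact ⟨T₀.size, T₀.npos, (Set.ssubset_iff_of_subset hsub).2 ⟨_, hxin, hnotin⟩⟩
end

section
/- For any computable encoding S of all transducers and any m ≥ 1, the language L^S_{≤m} is decidable. -/
/-! ## Auxiliary development for Statement 2 -/

namespace FSCAux

open List

/-- Decode a binary string (msb first) to a natural number. -/
def decodeBin (l : List Bool) : ℕ := l.foldl (fun n b => 2 * n + cond b 1 0) 0

theorem foldr_bits (i : ℕ) :
    (Nat.bits i).foldr (fun b n => 2 * n + cond b 1 0) 0 = i := by
  induction i using Nat.binaryRec' with
  | zero => simp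
  | bit b n h ih =>
    rw [Nat.bits_append_bit n b h]
    simp only [List.foldr_cons, ih, Nat.bit_val]
    cases b <;> simp

theorem decodeBin_binRep (i : ℕ) : decodeBin (binRep i) = i := by
  simp only [decodeBin, binRep, List.foldl_reverse]
  exact foldr_bits i

theorem binRep_head (i : ℕ) (h : i ≠ 0) : ∃ l, binRep i = true :: l := by
  induction i using Nat.binaryRec' with
  | zero => exact absurd rfl h
  | bit b n hb ih =>
    unfold binRep
    rw [Nat.bits_append_bit n b hb]
    rcases eq_or_ne n 0 with rfl | hn
    · rw [hb rfl]
      exact ⟨[], by simp⟩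
    · obtain ⟨l, hl⟩ := ih hn
      exact ⟨l ++ [b], by simpa [binRep] using congrArg (· ++ [b]) hl⟩

/-- Parser state: pending bit, mode, buffer, target register, accumulated
(reversed) transition list. -/
abbrev PState := Option Bool × ℕ × List Bool × ℕ × List (ℕ × List Bool)

/-- Process one (pair of) input bits. -/
def pp (s : ℕ × List Bool × ℕ × List (ℕ × List Bool)) (ab : Bool × Bool) :
    ℕ × List Bool × ℕ × List (ℕ × List Bool) :=
  cond (s.1 == 0)
    (cond ab.1
      (cond ab.2 (2, [], 1, s.2.2.2) (1, [ab.1], s.2.2.1, s.2.2.2))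
      (cond ab.2 (3, [], s.2.2.1, s.2.2.2)
        (0, [], s.2.2.1, (s.2.2.2.length / 2, []) :: s.2.2.2)))
  (cond (s.1 == 1)
    (cond ab.2 (2, [], decodeBin (s.2.1 ++ [ab.1]), s.2.2.2)
      (1, s.2.1 ++ [ab.1], s.2.2.1, s.2.2.2))
  (cond (s.1 == 2)
    (cond ab.2 (4, [], s.2.2.1, s.2.2.2)
      (0, [], s.2.2.1, (s.2.2.1 - 1, []) :: s.2.2.2))
  (cond (s.1 == 3)
    (cond ab.2 (3, s.2.1 ++ [!ab.1], s.2.2.1, s.2.2.2)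
      (0, [], s.2.2.1, (s.2.2.2.length / 2, s.2.1 ++ [!ab.1]) :: s.2.2.2))
    (cond ab.2 (4, s.2.1 ++ [!ab.1], s.2.2.1, s.2.2.2)
      (0, [], s.2.2.1, (s.2.2.1 - 1, s.2.1 ++ [!ab.1]) :: s.2.2.2)))))

/-- Process one input bit. -/
def pstep (s : PState) (c : Bool) : PState :=
  s.1.casesOn (some c, s.2) (fun a => (none, pp s.2 (a, c)))

/-- Parse a standard encoding into a transition table. -/
def parse (e : List Bool) : List (ℕ × List Bool) :=
  (e.foldl pstep (none, 0, [], 0, [])).2.2.2.2.reverse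

theorem fold_dagger1 : ∀ (w : List Bool), w ≠ [] → ∀ (B : List Bool) (t : ℕ)
    (A : List (ℕ × List Bool)),
    (dagger w).foldl pstep (none, 1, B, t, A) = (none, 2, [], decodeBin (B ++ w), A)
  | [], h => absurd rfl h
  | [a], _ => fun B t A => by
    simp [dagger, pstep, pp]
  | a :: b :: v, _ => fun B t A => by
    have ih := fold_dagger1 (b :: v) (by simp) (B ++ [a]) t A
    simp only [dagger, List.foldl_cons, pstep, pp] at ih ⊢
    simpa using ih

theorem fold_dagger0 (w : List Bool) (hw : ∃ l, w = true :: l) (t : ℕ)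
    (A : List (ℕ × List Bool)) :
    (dagger w).foldl pstep (none, 0, [], t, A) = (none, 2, [], decodeBin w, A) := by
  obtain ⟨l, rfl⟩ := hw
  cases l with
  | nil => simp [dagger, pstep, pp, decodeBin]
  | cons c l' =>
    have ih := fold_dagger1 (c :: l') (by simp) [true] t A
    simp only [dagger, List.foldl_cons, pstep, pp] at ih ⊢
    simpa using ih

theorem fold_diam3 : ∀ (w : List Bool), w ≠ [] → ∀ (B : List Bool) (t : ℕ)
    (A : List (ℕ × List Bool)),
    ((dagger w).map (!·)).foldl pstep (none, 3, B, t, A)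
      = (none, 0, [], t, (A.length / 2, B ++ w) :: A)
  | [], h => absurd rfl h
  | [a], _ => fun B t A => by
    simp [dagger, pstep, pp]
  | a :: b :: v, _ => fun B t A => by
    have ih := fold_diam3 (b :: v) (by simp) (B ++ [a]) t A
    simp only [dagger, List.map_cons, List.foldl_cons, pstep, pp] at ih ⊢
    simpa using ih

theorem fold_diam4 : ∀ (w : List Bool), w ≠ [] → ∀ (B : List Bool) (t : ℕ)
    (A : List (ℕ × List Bool)),
    ((dagger w).map (!·)).foldl pstep (none, 4, B, t, A)
      = (none, 0, [], t, (t - 1, B ++ w) :: A)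
  | [], h => absurd rfl h
  | [a], _ => fun B t A => by
    simp [dagger, pstep, pp]
  | a :: b :: v, _ => fun B t A => by
    have ih := fold_diam4 (b :: v) (by simp) (B ++ [a]) t A
    simp only [dagger, List.map_cons, List.foldl_cons, pstep, pp] at ih ⊢
    simpa using ih

theorem fold_diamond0 (v : List Bool) (t : ℕ) (A : List (ℕ × List Bool)) :
    (diamond v).foldl pstep (none, 0, [], t, A)
      = (none, 0, [], t, (A.length / 2, v) :: A) := by
  cases v with
  | nil => simp [diamond, dagger, pstep, pp]
  | cons c v' =>
    have ih := fold_diam3 (c :: v') (by simp) [] t A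
    simp only [diamond, dagger, List.map_cons, List.foldl_cons, pstep, pp] at ih ⊢
    simpa using ih

theorem fold_diamond2 (v : List Bool) (t : ℕ) (A : List (ℕ × List Bool)) :
    (diamond v).foldl pstep (none, 2, [], t, A)
      = (none, 0, [], t, (t - 1, v) :: A) := by
  cases v with
  | nil => simp [diamond, dagger, pstep, pp]
  | cons c v' =>
    have ih := fold_diam4 (c :: v') (by simp) [] t A
    simp only [diamond, dagger, List.map_cons, List.foldl_cons, pstep, pp] at ih ⊢
    simpa using ih

theorem fold_encT {n : ℕ} (j : Fin n) (qv : Fin n × List Bool) (t : ℕ)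
    (A : List (ℕ × List Bool)) (hA : A.length / 2 = j.val) :
    ∃ t', (encTransition j qv).foldl pstep (none, 0, [], t, A)
      = (none, 0, [], t', (qv.1.val, qv.2) :: A) := by
  unfold encTransition
  by_cases h : qv.1 = j
  · refine ⟨t, ?_⟩
    rw [if_pos h, List.nil_append, fold_diamond0, hA, h]
  · refine ⟨qv.1.val + 1, ?_⟩
    rw [if_neg h, List.foldl_append,
      fold_dagger0 _ (binRep_head (qv.1.val + 1) (Nat.succ_ne_zero _)),
      decodeBin_binRep, fold_diamond2]
    simp

theorem fold_states {n : ℕ} (d : Fin n → Bool → Fin n × List Bool) :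
    ∀ (l : List (Fin n)) (k : ℕ), (∀ i (h : i < l.length), (l[i]'h).val = k + i) →
    ∀ (t : ℕ) (A : List (ℕ × List Bool)), A.length = 2 * k →
    ∃ t', (l.flatMap fun j =>
        encTransition j (d j false) ++ encTransition j (d j true)).foldl pstep
        (none, 0, [], t, A)
      = (none, 0, [], t',
        (l.flatMap fun j =>
          [((d j false).1.val, (d j false).2),
           ((d j true).1.val, (d j true).2)]).reverse ++ A)
  | [], k, _ => fun t A _ => ⟨t, by simp⟩
  | j :: l', k, hl => fun t A hA => by
    have hj : j.val = k := by exact hl 0 (by simp)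
    obtain ⟨t1, h1⟩ := fold_encT j (d j false) t A (by omega)
    obtain ⟨t2, h2⟩ := fold_encT j (d j true) t1
      (((d j false).1.val, (d j false).2) :: A) (by simp; omega)
    obtain ⟨t3, h3⟩ := fold_states d l' (k + 1)
      (fun i h => by
        have := hl (i + 1) (by simpa using Nat.succ_lt_succ h)
        simpa [Nat.add_assoc, Nat.add_comm 1 i] using this) t2
      (((d j true).1.val, (d j true).2) :: ((d j false).1.val, (d j false).2) :: A)
      (by simp [hA]; omega)
    refine ⟨t3, ?_⟩
    simp only [List.flatMap_cons, List.foldl_append, h1, h2, h3]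
    simp

/-- The transition table of a transducer. -/
def repOf (T : Transducer) : List (ℕ × List Bool) :=
  (List.finRange T.n).flatMap fun j =>
    [((T.delta j false).1.val, (T.delta j false).2),
     ((T.delta j true).1.val, (T.delta j true).2)]

theorem parse_stdEnc (T : Transducer) : parse (stdEnc T) = repOf T := by
  unfold parse stdEnc
  obtain ⟨t', h⟩ := fold_states T.delta (List.finRange T.n) 0
    (fun i h => by simp [List.getElem_finRange]) 0 [] rfl
  rw [h]
  simp [repOf]

theorem repOf_length (T : Transducer) : (repOf T).length = 2 * T.n := by
  have : ∀ {α β : Type} (l : List α) (f g : α → β),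
      (l.flatMap fun x => [f x, g x]).length = 2 * l.length := by
    intro α β l f g
    induction l with
    | nil => simp
    | cons a l ih => simp [ih]; omega
  simp [repOf]; omega

/-- One simulation step. -/
def simStep (r : List (ℕ × List Bool)) (s : ℕ × List Bool) (a : Bool) :
    ℕ × List Bool :=
  (r[2 * s.1 + cond a 1 0]?).casesOn s (fun z => (z.1, s.2 ++ z.2))

/-- Simulate a transition table on an input string. -/
def sim (r : List (ℕ × List Bool)) (p : List Bool) : List Bool :=
  (p.foldl (simStep r) (0, [])).2

theorem get2 : ∀ {α β : Type} (l : List α) (f g : α → β) (i : ℕ) (h : i < l.length)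
    (c : Bool), (l.flatMap fun x => [f x, g x])[2 * i + cond c 1 0]?
      = some (cond c (g (l.get ⟨i, h⟩)) (f (l.get ⟨i, h⟩)))
  | _, _, [], _, _, i, h => absurd h (by simp)
  | _, _, x :: l, f, g, 0, h => fun c => by cases c <;> simp
  | _, _, x :: l, f, g, i + 1, h => fun c => by
    have ih := get2 l f g i (by simpa using h) c
    have harith : 2 * (i + 1) + cond c 1 0 = (2 * i + cond c 1 0) + 1 + 1 := by
      cases c <;> simp <;> omega
    simp only [List.flatMap_cons, harith, List.cons_append, List.getElem?_cons_succ]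
    simpa using ih

theorem sim_run (T : Transducer) : ∀ (p : List Bool) (q : Fin T.n) (out : List Bool),
    p.foldl (simStep (repOf T)) (q.val, out) = ((T.run q p).1.val, out ++ (T.run q p).2)
  | [], q, out => by simp [Transducer.run]
  | a :: p, q, out => by
    have hq : q.val < (List.finRange T.n).length := by simp [q.isLt]
    have hget := get2 (List.finRange T.n)
      (fun j => ((T.delta j false).1.val, (T.delta j false).2))
      (fun j => ((T.delta j true).1.val, (T.delta j true).2)) q.val hq a
    have hfin : (List.finRange T.n).get ⟨q.val, hq⟩ = q := by
      simp [List.get_eq_getElem, List.getElem_finRange, Fin.ext_iff]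
    rw [hfin] at hget
    have hstep : simStep (repOf T) (q.val, out) a
        = ((T.delta q a).1.val, out ++ (T.delta q a).2) := by
      unfold simStep repOf
      rw [hget]
      cases a <;> rfl
    have ih := sim_run T p (T.delta q a).1 (out ++ (T.delta q a).2)
    simp only [List.foldl_cons, hstep, ih, Transducer.run]
    simp

theorem sim_output (T : Transducer) (p : List Bool) : sim (repOf T) p = T.output p := by
  unfold sim Transducer.output
  have := sim_run T p T.start []
  have hs : (T.start.val : ℕ) = 0 := rfl
  rw [hs] at this
  rw [this]
  simp

theorem id_run : ∀ (p : List Bool) (q : Fin idTransducer.n),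
    idTransducer.run q p = (q, p)
  | [], q => rfl
  | a :: p, q => by
    have ih := id_run p q
    simp only [Transducer.run, idTransducer] at ih ⊢
    rw [ih]
    rfl

theorem id_output (p : List Bool) : idTransducer.output p = p := by
  unfold Transducer.output
  rw [id_run]

/-! ### Enumeration of short strings -/

/-- All boolean strings of length at most `n`. -/
def allLists : ℕ → List (List Bool) := fun n =>
  Nat.rec [[]] (fun _ IH => [] :: IH.flatMap fun l => [false :: l, true :: l]) n

@[simp] theorem allLists_zero : allLists 0 = [[]] := rfl

@[simp] theorem allLists_succ (n : ℕ) :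
    allLists (n + 1) = [] :: (allLists n).flatMap fun l => [false :: l, true :: l] := rfl

theorem mem_allLists : ∀ (n : ℕ) (l : List Bool), l ∈ allLists n ↔ l.length ≤ n
  | 0, l => by simp [Nat.le_zero, List.length_eq_zero_iff]
  | n + 1, l => by
    cases l with
    | nil => simp
    | cons a l' =>
      have ih := mem_allLists n l'
      simp only [allLists_succ, List.mem_cons, List.mem_flatMap]
      constructor
      · rintro (h | ⟨w, hw, hmem⟩)
        · exact absurd h (by simp)
        · simp at hmem
          rcases hmem with ⟨rfl, rfl⟩ | ⟨rfl, rfl⟩ <;>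
            simpa using Nat.succ_le_succ (ih.mp hw)
      · intro h
        right
        refine ⟨l', ih.mpr (by simpa using Nat.le_of_succ_le_succ h), ?_⟩
        cases a <;> simp

/-- All pairs of boolean strings, each of length at most `b`. -/
def pairsList (b : ℕ) : List (List Bool × List Bool) :=
  (allLists b).flatMap fun σ => (allLists b).map fun p => (σ, p)

theorem mem_pairsList (b : ℕ) (σ p : List Bool) :
    (σ, p) ∈ pairsList b ↔ σ.length ≤ b ∧ p.length ≤ b := by
  simp [pairsList, List.mem_flatMap, List.mem_map, mem_allLists, Prod.ext_iff]

/-! ### `foldr min` lemmas -/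

theorem foldr_min_le {l : List ℕ} {b a : ℕ} (h : a ∈ l) : l.foldr min b ≤ a := by
  induction l with
  | nil => simp at h
  | cons c l ih =>
    rcases List.mem_cons.mp h with rfl | h'
    · exact min_le_left _ _
    · exact le_trans (min_le_right _ _) (ih h')

theorem foldr_min_mem (l : List ℕ) (b : ℕ) : l.foldr min b = b ∨ l.foldr min b ∈ l := by
  induction l with
  | nil => simp
  | cons c l ih =>
    rcases le_total c (l.foldr min b) with h | h
    · right; simp [min_eq_left h]
    · rw [List.foldr_cons, min_eq_right h]
      rcases ih with h' | h'
      · exact Or.inl h'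
      · exact Or.inr (List.mem_cons_of_mem _ h')

theorem foldr_or_eq_true {γ : Type} (l : List γ) (f : γ → Bool) :
    l.foldr (fun h b => b || f h) false = true ↔ ∃ h ∈ l, f h = true := by
  induction l with
  | nil => simp
  | cons c l ih => simp [ih, or_comm]

/-! ### The decision procedure -/

/-- A code for the identity transducer. -/
noncomputable def sigid (S : CompEncoding) : List Bool :=
  Classical.choose (S.decode_surj idTransducer)

theorem sigid_spec (S : CompEncoding) : S.decode (sigid S) = some idTransducer :=
  Classical.choose_spec (S.decode_surj idTransducer)

/-- An a priori bound on `C_S x`. -/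
noncomputable def bound (S : CompEncoding) (x : List Bool) : ℕ :=
  (sigid S).length + x.length

/-- All candidate descriptions, partially evaluated through `S.decode`. -/
noncomputable def evs (S : CompEncoding) (x : List Bool) :
    List ((ℕ × ℕ) × Option (List Bool) × List Bool) :=
  (pairsList (bound S x)).map fun σp =>
    ((σp.1.length, σp.2.length), (S.decode σp.1).map stdEnc, σp.2)

/-- Extract from the evaluated candidates those describing `x`: pairs
(cost, twice the transducer size). -/
def hitsF (x : List Bool) (l : List ((ℕ × ℕ) × Option (List Bool) × List Bool)) :
    List (ℕ × ℕ) :=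
  l.filterMap fun z => z.2.1.bind fun e =>
    if sim (parse e) z.2.2 = x then some (z.1.1 + z.1.2, (parse e).length) else none

noncomputable def hits (S : CompEncoding) (x : List Bool) : List (ℕ × ℕ) :=
  hitsF x (evs S x)

noncomputable def cmin (S : CompEncoding) (x : List Bool) : ℕ :=
  ((hits S x).map Prod.fst).foldr min (bound S x)

/-- The pure part of the decision procedure. -/
def postF (k mm : ℕ) (x : List Bool)
    (l : List ((ℕ × ℕ) × Option (List Bool) × List Bool)) : Bool :=
  (hitsF x l).foldr
    (fun h b => b ||
      (h.1 == ((hitsF x l).map Prod.fst).foldr min (k + x.length)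
        && decide (h.2 ≤ 2 * mm))) false

/-- The decision procedure for membership in `L^S_{≤ m}`. -/
noncomputable def decision (S : CompEncoding) (m : ℕ) (x : List Bool) : Bool :=
  postF (sigid S).length m x (evs S x)

theorem decision_eq (S : CompEncoding) (m : ℕ) (x : List Bool) :
    decision S m x = (hits S x).foldr
      (fun h b => b || (h.1 == cmin S x && decide (h.2 ≤ 2 * m))) false := rfl

/-! ### Correctness -/

theorem mem_hits (S : CompEncoding) (x : List Bool) (c l2 : ℕ) :
    (c, l2) ∈ hits S x ↔
      ∃ σ T p, σ.length ≤ bound S x ∧ p.length ≤ bound S x ∧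
        S.decode σ = some T ∧ T.output p = x ∧
        c = σ.length + p.length ∧ l2 = 2 * T.n := by
  unfold hits hitsF evs
  rw [List.mem_filterMap]
  constructor
  · rintro ⟨z, hz, hsome⟩
    rw [List.mem_map] at hz
    obtain ⟨⟨σ, p⟩, hσp, rfl⟩ := hz
    rw [mem_pairsList] at hσp
    simp only at hsome
    rw [Option.bind_eq_some_iff] at hsome
    obtain ⟨e, he, hite⟩ := hsome
    rw [Option.map_eq_some_iff] at he
    obtain ⟨T, hT, rfl⟩ := he
    rw [parse_stdEnc] at hite
    split_ifs at hite with hcond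
    · rw [Option.some_inj, Prod.mk.injEq] at hite
      refine ⟨σ, T, p, hσp.1, hσp.2, hT, ?_, hite.1.symm, ?_⟩
      · rw [← hcond, sim_output]
      · rw [← hite.2, repOf_length]
  · rintro ⟨σ, T, p, hσ, hp, hT, hout, rfl, rfl⟩
    refine ⟨((σ.length, p.length), (S.decode σ).map stdEnc, p), ?_, ?_⟩
    · rw [List.mem_map]
      exact ⟨(σ, p), (mem_pairsList _ _ _).mpr ⟨hσ, hp⟩, rfl⟩
    · simp only [hT, Option.map_some, Option.bind_some, parse_stdEnc,
        sim_output, hout, if_pos, repOf_length]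

theorem bound_mem_sizes (S : CompEncoding) (x : List Bool) :
    bound S x ∈ S.sizes x :=
  ⟨sigid S, idTransducer, x, sigid_spec S, id_output x, rfl⟩

theorem C_le_bound (S : CompEncoding) (x : List Bool) : S.C x ≤ bound S x :=
  Nat.sInf_le (bound_mem_sizes S x)

theorem cmin_eq_C (S : CompEncoding) (x : List Bool) : cmin S x = S.C x := by
  have hne : (S.sizes x).Nonempty := ⟨bound S x, bound_mem_sizes S x⟩
  have hCmem : S.C x ∈ S.sizes x := Nat.sInf_mem hne
  obtain ⟨σ, T, p, hT, hout, hc⟩ := hCmem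
  have hcb : S.C x ≤ bound S x := C_le_bound S x
  have hhit : (S.C x, 2 * T.n) ∈ hits S x :=
    (mem_hits S x _ _).mpr ⟨σ, T, p, by omega, by omega, hT, hout, hc, rfl⟩
  apply Nat.le_antisymm
  · exact foldr_min_le (List.mem_map.mpr ⟨_, hhit, rfl⟩)
  · rcases foldr_min_mem ((hits S x).map Prod.fst) (bound S x) with h | h
    · rw [cmin] at *; rw [h]; exact hcb
    · rw [List.mem_map] at h
      obtain ⟨⟨c', l2'⟩, hmem, hfst⟩ := h
      obtain ⟨σ', T', p', _, _, hT', hout', hc', _⟩ := (mem_hits S x _ _).mp hmem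
      rw [cmin, ← hfst]
      exact Nat.sInf_le ⟨σ', T', p', hT', hout', hc'⟩

theorem decision_iff (S : CompEncoding) (m : ℕ) (x : List Bool) :
    decision S m x = true ↔ x ∈ S.Lle m := by
  rw [decision_eq, foldr_or_eq_true]
  constructor
  · rintro ⟨⟨c, l2⟩, hmem, hb⟩
    rw [Bool.and_eq_true, beq_iff_eq, decide_eq_true_eq] at hb
    have hb1 : c = cmin S x := hb.1
    have hb2 : l2 ≤ 2 * m := hb.2
    obtain ⟨σ, T, p, _, _, hT, hout, hc, hl2⟩ := (mem_hits S x _ _).mp hmem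
    refine ⟨σ, T, p, hT, hout, ?_, ?_⟩
    · rw [← hc, hb1, cmin_eq_C]
    · have : l2 ≤ 2 * m := hb2
      rw [hl2] at this
      simpa [Transducer.size] using Nat.le_of_mul_le_mul_left (by omega) (by norm_num : 0 < 2)
  · rintro ⟨σ, T, p, hT, hout, hc, hsize⟩
    have hcb : σ.length + p.length ≤ bound S x := hc ▸ C_le_bound S x
    refine ⟨(σ.length + p.length, 2 * T.n),
      (mem_hits S x _ _).mpr ⟨σ, T, p, by omega, by omega, hT, hout, rfl, rfl⟩, ?_⟩
    rw [Bool.and_eq_true, beq_iff_eq, decide_eq_true_eq]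
    exact ⟨by rw [cmin_eq_C, hc], by simpa [Transducer.size] using Nat.mul_le_mul_left 2 hsize⟩

/-! ### Computability of the decision procedure -/

section Comp

open Primrec Computable

theorem nat_rec_opt {β σ : Type*} (l : List β) (F : σ → β → σ) (s0 : σ) :
    ∀ n, (Nat.rec (motive := fun _ => σ) s0
      (fun y IH => Option.casesOn (motive := fun _ => σ) (l[y]?) IH (fun b => F IH b)) n)
      = (l.take n).foldl F s0
  | 0 => by simp
  | n + 1 => by
    have ih := nat_rec_opt l F s0 n
    show (Option.casesOn (motive := fun _ => σ) (l[n]?) (Nat.rec (motive := fun _ => σ) s0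
      (fun y IH => Option.casesOn (motive := fun _ => σ) (l[y]?) IH (fun b => F IH b)) n)
      (fun b => F _ b)) = _
    rw [ih, List.take_succ]
    cases h : l[n]? <;> simp [List.foldl_append]

theorem clist_foldl {α β σ : Type*} [Primcodable α] [Primcodable β] [Primcodable σ]
    {f : α → List β} {g : α → σ} {h : α → σ × β → σ}
    (hf : Computable f) (hg : Computable g) (hh : Computable₂ h) :
    Computable fun a => (f a).foldl (fun s b => h a (s, b)) (g a) := by
  have hh' : Computable₂ fun (a : α) (p : ℕ × σ) =>
      Option.casesOn (motive := fun _ => σ) ((f a)[p.1]?) p.2 (fun b => h a (p.2, b)) :=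
    Computable.option_casesOn
      (Computable.list_getElem?.comp (hf.comp Computable.fst) (Computable.fst.comp Computable.snd))
      (Computable.snd.comp Computable.snd)
      (hh.comp (Computable.fst.comp Computable.fst)
        (Computable.pair (Computable.snd.comp (Computable.snd.comp Computable.fst))
          Computable.snd))
  have H := Computable.nat_rec (f := fun a => (f a).length) (g := g)
    (h := fun a (p : ℕ × σ) =>
      Option.casesOn (motive := fun _ => σ) ((f a)[p.1]?) p.2 (fun b => h a (p.2, b)))
    (Computable.list_length.comp hf) hg hh'
  refine H.of_eq fun a => ?_
  have := nat_rec_opt (f a) (fun s b => h a (s, b)) (g a) (f a).length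
  rw [List.take_length] at this
  exact this

theorem foldl_concat_eq_map {β σ : Type*} (g : β → σ) :
    ∀ (l : List β) (s0 : List σ), l.foldl (fun s b => s ++ [g b]) s0 = s0 ++ l.map g
  | [], s0 => by simp
  | b :: l, s0 => by simp [foldl_concat_eq_map g l (s0 ++ [g b])]

theorem clist_map {α β σ : Type*} [Primcodable α] [Primcodable β] [Primcodable σ]
    {f : α → List β} {g : α → β → σ} (hf : Computable f) (hg : Computable₂ g) :
    Computable fun a => (f a).map (g a) := by
  have H := clist_foldl (h := fun a (p : List σ × β) => p.1 ++ [g a p.2]) hf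
    (Computable.const ([] : List σ))
    ((Computable.list_append.comp (Computable.fst.comp Computable.snd)
      (Computable.list_cons.comp
        (hg.comp Computable.fst (Computable.snd.comp Computable.snd))
        (Computable.const ([] : List σ)))).to₂)
  exact H.of_eq fun a => by simpa using foldl_concat_eq_map (g a) (f a) []

theorem primrec_decodeBin : Primrec decodeBin := by
  have hh : Primrec₂ fun (_ : List Bool) (sb : ℕ × Bool) => 2 * sb.1 + cond sb.2 1 0 :=
    (Primrec.nat_add.comp (Primrec.nat_double.comp (Primrec.fst.comp Primrec.snd))
      (Primrec.cond (Primrec.snd.comp Primrec.snd) (Primrec.const 1) (Primrec.const 0))).to₂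
  exact (Primrec.list_foldl Primrec.id (Primrec.const 0) hh).of_eq fun l => rfl

theorem primrec_pp : Primrec₂ pp := by
  have pm : Primrec fun z : (ℕ × List Bool × ℕ × List (ℕ × List Bool)) × Bool × Bool =>
      z.1.1 := Primrec.fst.comp Primrec.fst
  have pbuf : Primrec fun z : (ℕ × List Bool × ℕ × List (ℕ × List Bool)) × Bool × Bool =>
      z.1.2.1 := Primrec.fst.comp (Primrec.snd.comp Primrec.fst)
  have pt : Primrec fun z : (ℕ × List Bool × ℕ × List (ℕ × List Bool)) × Bool × Bool =>
      z.1.2.2.1 := Primrec.fst.comp (Primrec.snd.comp (Primrec.snd.comp Primrec.fst))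
  have pacc : Primrec fun z : (ℕ × List Bool × ℕ × List (ℕ × List Bool)) × Bool × Bool =>
      z.1.2.2.2 := Primrec.snd.comp (Primrec.snd.comp (Primrec.snd.comp Primrec.fst))
  have pa : Primrec fun z : (ℕ × List Bool × ℕ × List (ℕ × List Bool)) × Bool × Bool =>
      z.2.1 := Primrec.fst.comp Primrec.snd
  have pb : Primrec fun z : (ℕ × List Bool × ℕ × List (ℕ × List Bool)) × Bool × Bool =>
      z.2.2 := Primrec.snd.comp Primrec.snd
  have hna := Primrec.not.comp pa
  have hBa := Primrec.list_append.comp pbuf (Primrec.list_cons.comp pa (Primrec.const ([] : List Bool)))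
  have hBna := Primrec.list_append.comp pbuf (Primrec.list_cons.comp hna (Primrec.const ([] : List Bool)))
  have hlen2 := Primrec.nat_div.comp (Primrec.list_length.comp pacc) (Primrec.const 2)
  have htm1 := Primrec.nat_sub.comp pt (Primrec.const 1)
  have hdecBa := primrec_decodeBin.comp hBa
  have c0 := Primrec.beq.comp pm (Primrec.const 0)
  have c1 := Primrec.beq.comp pm (Primrec.const 1)
  have c2 := Primrec.beq.comp pm (Primrec.const 2)
  have c3 := Primrec.beq.comp pm (Primrec.const 3)
  have L1 := (Primrec.const 2).pair ((Primrec.const ([] : List Bool)).pair ((Primrec.const 1).pair pacc))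
  have L2 := (Primrec.const 1).pair
    ((Primrec.list_cons.comp pa (Primrec.const ([] : List Bool))).pair (pt.pair pacc))
  have L3 := (Primrec.const 3).pair ((Primrec.const ([] : List Bool)).pair (pt.pair pacc))
  have L4 := (Primrec.const 0).pair ((Primrec.const ([] : List Bool)).pair (pt.pair
    (Primrec.list_cons.comp (hlen2.pair (Primrec.const ([] : List Bool))) pacc)))
  have L5 := (Primrec.const 2).pair ((Primrec.const ([] : List Bool)).pair (hdecBa.pair pacc))
  have L6 := (Primrec.const 1).pair (hBa.pair (pt.pair pacc))
  have L7 := (Primrec.const 4).pair ((Primrec.const ([] : List Bool)).pair (pt.pair pacc))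
  have L8 := (Primrec.const 0).pair ((Primrec.const ([] : List Bool)).pair (pt.pair
    (Primrec.list_cons.comp (htm1.pair (Primrec.const ([] : List Bool))) pacc)))
  have L9 := (Primrec.const 3).pair (hBna.pair (pt.pair pacc))
  have L10 := (Primrec.const 0).pair ((Primrec.const ([] : List Bool)).pair (pt.pair
    (Primrec.list_cons.comp (hlen2.pair hBna) pacc)))
  have L11 := (Primrec.const 4).pair (hBna.pair (pt.pair pacc))
  have L12 := (Primrec.const 0).pair ((Primrec.const ([] : List Bool)).pair (pt.pair
    (Primrec.list_cons.comp (htm1.pair hBna) pacc)))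
  have big := Primrec.cond c0
    (Primrec.cond pa (Primrec.cond pb L1 L2) (Primrec.cond pb L3 L4))
    (Primrec.cond c1 (Primrec.cond pb L5 L6)
      (Primrec.cond c2 (Primrec.cond pb L7 L8)
        (Primrec.cond c3 (Primrec.cond pb L9 L10)
          (Primrec.cond pb L11 L12))))
  exact big.of_eq fun z => rfl

theorem primrec_pstep : Primrec₂ pstep := by
  have H := Primrec.option_casesOn
    (o := fun z : PState × Bool => z.1.1)
    (f := fun z : PState × Bool => ((some z.2, z.1.2) : PState))
    (g := fun (z : PState × Bool) (a : Bool) => ((none, pp z.1.2 (a, z.2)) : PState))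
    (Primrec.fst.comp Primrec.fst)
    ((Primrec.option_some.comp Primrec.snd).pair (Primrec.snd.comp Primrec.fst))
    (((Primrec.const (none : Option Bool)).pair
      (primrec_pp.comp (Primrec.snd.comp (Primrec.fst.comp Primrec.fst))
        (Primrec.snd.pair (Primrec.snd.comp Primrec.fst)))).to₂)
  exact H.of_eq fun z => rfl

theorem primrec_parse : Primrec parse := by
  have hh : Primrec₂ fun (_ : List Bool) (sc : PState × Bool) => pstep sc.1 sc.2 :=
    (primrec_pstep.comp (Primrec.fst.comp Primrec.snd) (Primrec.snd.comp Primrec.snd)).to₂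
  have hfold := Primrec.list_foldl Primrec.id
    (Primrec.const ((none, 0, [], 0, []) : PState)) hh
  exact (Primrec.list_reverse.comp (Primrec.snd.comp (Primrec.snd.comp
    (Primrec.snd.comp (Primrec.snd.comp hfold))))).of_eq fun e => rfl

theorem primrec_sim : Primrec₂ sim := by
  have hstep : Primrec₂ fun (w : List (ℕ × List Bool) × List Bool)
      (sb : (ℕ × List Bool) × Bool) => simStep w.1 sb.1 sb.2 := by
    have ho : Primrec fun v : (List (ℕ × List Bool) × List Bool) × (ℕ × List Bool) × Bool =>
        v.1.1[2 * v.2.1.1 + cond v.2.2 1 0]? :=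
      Primrec.list_getElem?.comp (Primrec.fst.comp Primrec.fst)
        (Primrec.nat_add.comp
          (Primrec.nat_double.comp (Primrec.fst.comp (Primrec.fst.comp Primrec.snd)))
          (Primrec.cond (Primrec.snd.comp Primrec.snd) (Primrec.const 1) (Primrec.const 0)))
    have hf : Primrec fun v : (List (ℕ × List Bool) × List Bool) × (ℕ × List Bool) × Bool =>
        v.2.1 := Primrec.fst.comp Primrec.snd
    have hg : Primrec₂ fun (v : (List (ℕ × List Bool) × List Bool) × (ℕ × List Bool) × Bool)
        (z : ℕ × List Bool) => ((z.1, v.2.1.2 ++ z.2) : ℕ × List Bool) :=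
      ((Primrec.fst.comp Primrec.snd).pair
        (Primrec.list_append.comp
          (Primrec.snd.comp (Primrec.fst.comp (Primrec.snd.comp Primrec.fst)))
          (Primrec.snd.comp Primrec.snd))).to₂
    exact ((Primrec.option_casesOn ho hf hg).of_eq fun v => rfl).to₂
  have hfold := Primrec.list_foldl (Primrec.snd)
    (Primrec.const ((0, []) : ℕ × List Bool)) hstep
  exact (Primrec.snd.comp hfold).of_eq fun w => rfl

theorem primrec_allLists : Primrec allLists := by
  have hg : Primrec₂ fun (w : ℕ × List (List Bool)) (l : List Bool) =>
      [false :: l, true :: l] :=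
    (Primrec.list_cons.comp (Primrec.list_cons.comp (Primrec.const false) Primrec.snd)
      (Primrec.list_cons.comp (Primrec.list_cons.comp (Primrec.const true) Primrec.snd)
        (Primrec.const []))).to₂
  have hf : Primrec₂ fun (_ : ℕ) (IH : List (List Bool)) =>
      [] :: IH.flatMap fun l => [false :: l, true :: l] :=
    (Primrec.list_cons.comp (Primrec.const [])
      (Primrec.list_flatMap Primrec.snd hg)).to₂
  exact (Primrec.nat_rec₁ [[]] hf).of_eq fun n => rfl

theorem primrec_pairsList : Primrec pairsList := by
  have hg : Primrec₂ fun (w : ℕ × List Bool) (p : List Bool) => ((w.2, p) : List Bool × List Bool) :=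
    ((Primrec.snd.comp Primrec.fst).pair Primrec.snd).to₂
  have hm : Primrec₂ fun (b : ℕ) (σ : List Bool) => (allLists b).map fun p => (σ, p) :=
    (Primrec.list_map (primrec_allLists.comp Primrec.fst) hg).to₂
  exact Primrec.list_flatMap primrec_allLists hm

theorem primrec_hitsF : Primrec₂ hitsF := by
  have hcond : PrimrecPred fun u :
      ((List Bool × List ((ℕ × ℕ) × Option (List Bool) × List Bool)) ×
        ((ℕ × ℕ) × Option (List Bool) × List Bool)) × List Bool =>
      sim (parse u.2) u.1.2.2.2 = u.1.1.1 :=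
    Primrec.eq.comp
      (primrec_sim.comp (primrec_parse.comp Primrec.snd)
        (Primrec.snd.comp (Primrec.snd.comp (Primrec.snd.comp Primrec.fst))))
      (Primrec.fst.comp (Primrec.fst.comp Primrec.fst))
  have hthen : Primrec fun u :
      ((List Bool × List ((ℕ × ℕ) × Option (List Bool) × List Bool)) ×
        ((ℕ × ℕ) × Option (List Bool) × List Bool)) × List Bool =>
      (some (u.1.2.1.1 + u.1.2.1.2, (parse u.2).length) : Option (ℕ × ℕ)) :=
    Primrec.option_some.comp
      ((Primrec.nat_add.comp
        (Primrec.fst.comp (Primrec.fst.comp (Primrec.snd.comp Primrec.fst)))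
        (Primrec.snd.comp (Primrec.fst.comp (Primrec.snd.comp Primrec.fst)))).pair
       (Primrec.list_length.comp (primrec_parse.comp Primrec.snd)))
  have hg : Primrec₂ fun (v : (List Bool × List ((ℕ × ℕ) × Option (List Bool) × List Bool)) ×
      ((ℕ × ℕ) × Option (List Bool) × List Bool)) (e : List Bool) =>
      if sim (parse e) v.2.2.2 = v.1.1 then
        (some (v.2.1.1 + v.2.1.2, (parse e).length) : Option (ℕ × ℕ)) else none :=
    (Primrec.ite hcond hthen (Primrec.const (none : Option (ℕ × ℕ)))).to₂
  have hbind : Primrec₂ fun (w : List Bool × List ((ℕ × ℕ) × Option (List Bool) × List Bool))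
      (z : (ℕ × ℕ) × Option (List Bool) × List Bool) =>
      z.2.1.bind fun e => if sim (parse e) z.2.2 = w.1 then
        (some (z.1.1 + z.1.2, (parse e).length) : Option (ℕ × ℕ)) else none :=
    (Primrec.option_bind (Primrec.fst.comp (Primrec.snd.comp Primrec.snd)) hg).to₂
  exact ((Primrec.listFilterMap Primrec.snd hbind).of_eq fun w => rfl).to₂

theorem primrec_postF (k mm : ℕ) : Primrec₂ (postF k mm) := by
  have H : Primrec fun w : List Bool × List ((ℕ × ℕ) × Option (List Bool) × List Bool) =>
      hitsF w.1 w.2 := primrec_hitsF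
  have hC : Primrec fun w : List Bool × List ((ℕ × ℕ) × Option (List Bool) × List Bool) =>
      ((hitsF w.1 w.2).map Prod.fst).foldr min (k + w.1.length) := by
    have hg2 : Primrec₂ fun (_ : List Bool × List ((ℕ × ℕ) × Option (List Bool) × List Bool))
        (p : ℕ × ℕ) => p.1 := (Primrec.fst.comp Primrec.snd).to₂
    have hmap := Primrec.list_map H hg2
    exact (Primrec.list_foldr hmap
      (Primrec.nat_add.comp (Primrec.const k) (Primrec.list_length.comp Primrec.fst))
      ((Primrec.nat_min.comp (Primrec.fst.comp Primrec.snd)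
        (Primrec.snd.comp Primrec.snd)).to₂)).of_eq fun w => rfl
  have hstep : Primrec₂ fun (w : List Bool × List ((ℕ × ℕ) × Option (List Bool) × List Bool))
      (p : (ℕ × ℕ) × Bool) =>
      (p.2 || (p.1.1 == ((hitsF w.1 w.2).map Prod.fst).foldr min (k + w.1.length)
        && decide (p.1.2 ≤ 2 * mm)) : Bool) :=
    ((Primrec.dom_bool₂ (· || ·)).comp (Primrec.snd.comp Primrec.snd)
      ((Primrec.dom_bool₂ (· && ·)).comp
        (Primrec.beq.comp (Primrec.fst.comp (Primrec.fst.comp Primrec.snd))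
          (hC.comp Primrec.fst))
        (Primrec.nat_le.comp (Primrec.snd.comp (Primrec.fst.comp Primrec.snd))
          (Primrec.const (2 * mm))).decide)).to₂
  exact ((Primrec.list_foldr H (Primrec.const false) hstep).of_eq fun w => rfl).to₂

theorem computable_evs (S : CompEncoding) : Computable (evs S) := by
  have hf : Computable fun x : List Bool => pairsList (bound S x) :=
    ((primrec_pairsList.comp (Primrec.nat_add.comp (Primrec.const (sigid S).length)
      Primrec.list_length)).to_comp).of_eq fun x => rfl
  have hg : Computable₂ fun (x : List Bool) (σp : List Bool × List Bool) =>
      (((σp.1.length, σp.2.length), (S.decode σp.1).map stdEnc, σp.2) :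
        (ℕ × ℕ) × Option (List Bool) × List Bool) :=
    (Computable.pair
      (((Primrec.list_length.comp (Primrec.fst.comp Primrec.snd)).pair
        (Primrec.list_length.comp (Primrec.snd.comp Primrec.snd))).to_comp)
      (Computable.pair (S.decode_comp.comp (Computable.fst.comp Computable.snd))
        (Computable.snd.comp Computable.snd))).to₂
  exact (clist_map hf hg).of_eq fun x => rfl

theorem computable_decision (S : CompEncoding) (m : ℕ) : Computable (decision S m) := by
  have := ((primrec_postF (sigid S).length m).to_comp).comp
    (Computable.id) (computable_evs S)
  exact this.of_eq fun x => rfl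

end Comp

end FSCAux

theorem stmt2 (S : CompEncoding) (m : ℕ) (hm : 1 ≤ m) :
    ComputablePred (· ∈ S.Lle m) := by
  rw [ComputablePred.computable_iff]
  refine ⟨FSCAux.decision S m, FSCAux.computable_decision S m, ?_⟩
  funext x
  exact propext (FSCAux.decision_iff S m x).symm
end

section
/- Let n, m ≥ 1 and let m be chosen sufficiently large (m = 16n² + 36n + 19 suffices). Then for every description (T_σ, p) of x_n(m) in the standard encoding (i.e. σ ∈ D_{S₀}, p ∈ {0,1}*, T_σ(p) = x_n(m)) with size(T_σ) ≤ n, one has |σ| + |p| > m²/2. -/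
namespace Stmt4

open List

/-- The pattern `1 0^j 1`. -/
def mk (j : ℕ) : List Bool := true :: (List.replicate j false ++ [true])

lemma mk_length (j : ℕ) : (mk j).length = j + 2 := by simp [mk]

lemma dagger_cons_length : ∀ (w : List Bool) (a : Bool),
    (_root_.dagger (a :: w)).length = 2 * w.length + 2 := by
  intro w
  induction w with
  | nil => intro a; simp [dagger]
  | cons b v ih => intro a; simp only [dagger, List.length_cons, ih b]; omega

lemma diamond_length (v : List Bool) : (diamond v).length = 2 * v.length + 2 := by
  simp [diamond, dagger_cons_length]

lemma encTransition_length_ge {N : ℕ} (j : Fin N) (t : Fin N × List Bool) :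
    2 * t.2.length + 2 ≤ (encTransition j t).length := by
  simp [encTransition, diamond_length]

lemma stdEnc_length_ge (T : Transducer) (q : Fin T.n) (b : Bool) :
    2 * (T.delta q b).2.length + 4 ≤ (stdEnc T).length := by
  have hmem : q ∈ List.finRange T.n := List.mem_finRange q
  rw [stdEnc, List.length_flatMap]
  have h1 : 2 * (T.delta q b).2.length + 4 ≤
      ((Function.comp List.length fun j =>
        encTransition j (T.delta j false) ++ encTransition j (T.delta j true)) q) := by
    simp only [Function.comp_apply, List.length_append]
    have h0 := encTransition_length_ge q (T.delta q false)
    have h1 := encTransition_length_ge q (T.delta q true)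
    cases b <;> omega
  exact le_trans h1 (List.single_le_sum (fun x _ => Nat.zero_le x) _
    (List.mem_map_of_mem hmem))

/-- The list of output chunks produced when running from state `q` on input. -/
def outs (T : Transducer) : Fin T.n → List Bool → List (List Bool)
  | _, [] => []
  | q, a :: x => (T.delta q a).2 :: outs T (T.delta q a).1 x

lemma run_eq_outs (T : Transducer) : ∀ (p : List Bool) (q : Fin T.n),
    (T.run q p).2 = (outs T q p).flatten := by
  intro p
  induction p with
  | nil => intro q; simp [Transducer.run, outs]
  | cons a x ih => intro q; simp [Transducer.run, outs, ih]

lemma outs_length (T : Transducer) : ∀ (p : List Bool) (q : Fin T.n),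
    (outs T q p).length = p.length := by
  intro p
  induction p with
  | nil => intro q; simp [outs]
  | cons a x ih => intro q; simp [outs, ih]

lemma outs_mem (T : Transducer) : ∀ (p : List Bool) (q : Fin T.n) (c : List Bool),
    c ∈ outs T q p → ∃ q' b', c = (T.delta q' b').2 := by
  intro p
  induction p with
  | nil => intro q c hc; simp [outs] at hc
  | cons a x ih =>
    intro q c hc
    simp only [outs, List.mem_cons] at hc
    rcases hc with h | h
    · exact ⟨q, a, h⟩
    · exact ih _ c h

end Stmt4
namespace Stmt4
open List

lemma u_length (n i : ℕ) (hi : i ≤ 2*n+2) : (u n i).length = 2*n+3 := by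
  simp [u]; omega

lemma u_getElem (n i : ℕ) (hi : i ≤ 2*n+1) (s : ℕ) (hs : s < 2*n+3) :
    (u n i)[s]'(by rw [u_length n i (by omega)]; omega) =
      (decide (s = 0) || decide (i < s)) := by
  match s with
  | 0 => simp [u]
  | t+1 =>
    simp only [u, List.getElem_cons_succ]
    by_cases ht : t < i
    · rw [List.getElem_append_left (by simpa using ht)]
      have h1 : ¬ i < t + 1 := by omega
      simp [h1]
    · rw [List.getElem_append_right (by simpa using ht)]
      have h1 : i < t + 1 := by omega
      simp [h1]

lemma W_length (n i N : ℕ) (hi : i ≤ 2*n+2) :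
    ((List.replicate N (u n i)).flatten).length = N * (2*n+3) := by
  simp [List.length_flatten, List.map_replicate, u_length n i hi, List.sum_replicate,
    Nat.smul_one_eq_cast]

lemma W_getElem (n i : ℕ) (hi : i ≤ 2*n+1) : ∀ (N pos : ℕ) (h : pos < N * (2*n+3)),
    ((List.replicate N (u n i)).flatten)[pos]'(by rw [W_length n i N (by omega)]; omega) =
      (decide (pos % (2*n+3) = 0) || decide (i < pos % (2*n+3))) := by
  intro N
  induction N with
  | zero => intro pos h; omega
  | succ N ih =>
    intro pos h
    have e : (List.replicate (N+1) (u n i)).flatten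
        = u n i ++ (List.replicate N (u n i)).flatten := by
      rw [List.replicate_succ, List.flatten_cons]
    rw [List.getElem_of_eq e]
    by_cases hp : pos < 2*n+3
    · rw [List.getElem_append_left (by rw [u_length n i (by omega)]; omega)]
      rw [u_getElem n i hi pos hp, Nat.mod_eq_of_lt hp]
    · rw [List.getElem_append_right (by rw [u_length n i (by omega)]; omega)]
      have h2 : pos - (u n i).length < N * (2*n+3) := by
        rw [u_length n i (by omega)]
        have : (N+1) * (2*n+3) = N*(2*n+3) + (2*n+3) := by ring
        omega
      rw [ih (pos - (u n i).length) h2]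
      rw [u_length n i (by omega)]
      have hmod : pos % (2*n+3) = (pos - (2*n+3)) % (2*n+3) :=
        Nat.mod_eq_sub_mod (by omega)
      rw [hmod]

lemma infix_getElem {α : Type*} (w W s t : List α) (hw : W = s ++ w ++ t)
    (k : ℕ) (hk : k < w.length) :
    W[s.length + k]'(by subst hw; simp; omega) = w[k]'(hk) := by
  subst hw
  have e : s ++ w ++ t = s ++ (w ++ t) := List.append_assoc s w t
  rw [List.getElem_of_eq e]
  rw [List.getElem_append_right (by omega : s.length ≤ s.length + k)]
  have h : s.length + k - s.length = k := by omega
  simp only [h]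
  rw [List.getElem_append_left hk]

end Stmt4
namespace Stmt4
open List

lemma mk_getElem (j k : ℕ) (hk : k < j + 2) :
    (mk j)[k]'(by rw [mk_length]; omega) =
      (decide (k = 0) || decide (j < k)) := by
  match k with
  | 0 => simp [mk]
  | t+1 =>
    simp only [mk, List.getElem_cons_succ]
    by_cases ht : t < j
    · rw [List.getElem_append_left (by simpa using ht)]
      have h1 : ¬ j < t + 1 := by omega
      simp [h1]
    · rw [List.getElem_append_right (by simpa using ht)]
      have h1 : j < t + 1 := by omega
      simp [h1]

lemma marks_region {n i j N : ℕ} (hi1 : 1 ≤ i) (hi2 : i ≤ 2*n+1) (hj : 1 ≤ j)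
    (h : mk j <:+: (List.replicate N (u n i)).flatten) : j = i := by
  obtain ⟨s, t, hw⟩ := h
  have hWlen : ((List.replicate N (u n i)).flatten).length = N * (2*n+3) :=
    W_length n i N (by omega)
  have hlen : s.length + (j+2) + t.length = N * (2*n+3) := by
    rw [← hWlen, ← hw]; simp [mk_length]; omega
  have hprop : ∀ k, k < j + 2 →
      (((s.length + k) % (2*n+3) = 0 ∨ i < (s.length + k) % (2*n+3)) ↔ (k = 0 ∨ j < k)) := by
    intro k hk
    have h1 := infix_getElem (mk j) _ s t hw.symm k (by rw [mk_length]; omega)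
    have h2 := W_getElem n i hi2 N (s.length + k) (by omega)
    have h3 : ((decide ((s.length + k) % (2*n+3) = 0)
        || decide (i < (s.length + k) % (2*n+3))) = (decide (k = 0) || decide (j < k))) := by
      rw [← h2, h1, mk_getElem j k hk]
    have h4 := congrArg (fun b => b = true) h3
    simpa using h4
  set d := s.length + 1 with hd
  set r := d % (2*n+3) with hr
  have hrL : r < 2*n+3 := Nat.mod_lt _ (by omega)
  -- the inductive mod computation along the 0-run
  have key : ∀ k, k ≤ j → (d + k) % (2*n+3) = r + k ∧ (k < j → 1 ≤ r + k ∧ r + k ≤ i) := by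
    intro k
    induction k with
    | zero =>
      intro _
      refine ⟨by simp [hr], fun hk0 => ?_⟩
      have := hprop 1 (by omega)
      have h5 : ¬ (1 = 0 ∨ j < 1) := by omega
      rw [show s.length + 1 = d by omega] at this
      have h6 := (not_iff_not.mpr this).mpr h5
      push_neg at h6
      omega
    | succ k ih =>
      intro hk
      obtain ⟨hmodk, hik⟩ := ih (by omega)
      have hik' := hik (by omega)
      have hstep : (d + (k+1)) % (2*n+3) = r + (k + 1) := by
        have e1 : (d + k + 1) % (2*n+3) = ((d + k) % (2*n+3) + 1 % (2*n+3)) % (2*n+3) :=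
          Nat.add_mod _ _ _
        have e2 : 1 % (2*n+3) = 1 := Nat.mod_eq_of_lt (by omega)
        have e3 : r + k + 1 < 2*n+3 := by omega
        rw [show d + (k+1) = d + k + 1 by omega, e1, e2, hmodk, Nat.mod_eq_of_lt e3]
        omega
      refine ⟨hstep, fun hklt => ?_⟩
      have := hprop (k+2) (by omega)
      have h5 : ¬ (k+2 = 0 ∨ j < k+2) := by omega
      rw [show s.length + (k+2) = d + (k+1) by omega, hstep] at this
      have h6 := (not_iff_not.mpr this).mpr h5
      push_neg at h6
      omega
  have hr1 : 1 ≤ r ∧ r ≤ i := by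
    have := (key 0 (by omega)).2 (by omega)
    omega
  have hrj : (d + j) % (2*n+3) = r + j := (key j le_rfl).1
  have hrj1 : r + (j-1) ≤ i := by
    have := (key (j-1) (by omega)).2 (by omega)
    omega
  -- the final `true` at position s.length + (j+1) = d + j
  have hTend : r + j = 0 ∨ i < r + j := by
    have := hprop (j+1) (by omega)
    have h5 : (j+1 = 0 ∨ j < j+1) := by omega
    rw [show s.length + (j+1) = d + j by omega, hrj] at this
    exact this.mpr h5
  -- the initial `true` at position s.length = d - 1
  have hdm1 : s.length % (2*n+3) = r - 1 := by
    have hdm := Nat.div_add_mod d (2*n+3)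
    have e1 : s.length = (2*n+3) * (d / (2*n+3)) + (r - 1) := by omega
    rw [e1, Nat.mul_add_mod, Nat.mod_eq_of_lt (by omega)]
  have hTstart : r - 1 = 0 ∨ i < r - 1 := by
    have := hprop 0 (by omega)
    have h5 : (0 = 0 ∨ j < 0) := by omega
    rw [show s.length + 0 = s.length by omega, hdm1] at this
    exact this.mpr h5
  omega

end Stmt4
namespace Stmt4
open List

lemma drop_flatten_replicate {α : Type*} (w : List α) (L : ℕ) (hwL : w.length = L) :
    ∀ (q N : ℕ), q ≤ N →
    ((List.replicate N w).flatten).drop (L * q) = (List.replicate (N - q) w).flatten := by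
  intro q
  induction q with
  | zero => intro N h; simp
  | succ q ih =>
    intro N h
    obtain ⟨N', rfl⟩ : ∃ N', N = N' + 1 := ⟨N - 1, by omega⟩
    rw [List.replicate_succ, List.flatten_cons]
    have e1 : L * (q+1) = w.length + L * q := by rw [hwL]; ring
    rw [e1, List.drop_append, List.drop_eq_nil_of_le (by omega)]
    simp only [List.nil_append, Nat.add_sub_cancel_left]
    rw [ih N' (by omega), show N'+1-(q+1) = N'-q by omega]

lemma contains_u {n i N : ℕ} (hi2 : i ≤ 2*n+1) (v : List Bool)
    (hc : v <:+: (List.replicate N (u n i)).flatten) (hlen : 2*(2*n+3) ≤ v.length) :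
    u n i <:+: v := by
  obtain ⟨s, t, hw⟩ := hc
  have hu : (u n i).length = 2*n+3 := u_length n i (by omega)
  obtain ⟨q, r, hdm, hrL⟩ : ∃ q r, s.length = (2*n+3) * q + r ∧ r < 2*n+3 :=
    ⟨s.length / (2*n+3), s.length % (2*n+3), (Nat.div_add_mod _ _).symm,
      Nat.mod_lt _ (by omega)⟩
  have hWlen : ((List.replicate N (u n i)).flatten).length = N * (2*n+3) :=
    W_length n i N (by omega)
  have hsum : s.length + v.length + t.length = N * (2*n+3) := by
    rw [← hWlen, ← hw]; simp; omega
  have hqN : q + 2 ≤ N := by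
    have h1 : (2*n+3) * (q + 2) ≤ (2*n+3) * N := by
      have : (2*n+3) * (q+2) = (2*n+3)*q + 2*(2*n+3) := by ring
      have h2 : (2*n+3) * N = N * (2*n+3) := by ring
      omega
    exact Nat.le_of_mul_le_mul_left h1 (by omega)
  have h2 : ((List.replicate N (u n i)).flatten).drop s.length
      = (u n i).drop r ++ ((List.replicate (N - q - 1) (u n i))).flatten := by
    rw [hdm, ← List.drop_drop,
      drop_flatten_replicate (u n i) (2*n+3) hu q N (by omega),
      show N - q = (N - q - 1) + 1 by omega, List.replicate_succ, List.flatten_cons,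
      List.drop_append, show r - (u n i).length = 0 by omega,
      List.drop_zero, Nat.add_sub_cancel]
  have h3 : v ++ t = ((u n i).drop r ++ u n i) ++ (List.replicate (N - q - 2) (u n i)).flatten := by
    have h4 : ((List.replicate N (u n i)).flatten).drop s.length = v ++ t := by
      rw [← hw, List.append_assoc, List.drop_left]
    rw [← h4, h2, show N - q - 1 = (N - q - 2) + 1 by omega, List.replicate_succ,
      List.flatten_cons, ← List.append_assoc]
  rcases List.append_eq_append_iff.mp h3 with ⟨a', ha1, ha2⟩ | ⟨c', hc1, hc2⟩
  · have hla : ((u n i).drop r ++ u n i).length = (2*n+3) - r + (2*n+3) := by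
      simp [hu]
    have ha0 : a' = [] := by
      have := congrArg List.length ha1
      simp [hu] at this
      have : a'.length = 0 := by omega
      exact List.eq_nil_of_length_eq_zero this
    subst ha0
    rw [List.append_nil] at ha1
    exact ⟨(u n i).drop r, [], by rw [List.append_nil, ha1]⟩
  · exact ⟨(u n i).drop r, c', by simp [hc1]⟩

lemma mk_infix_u (n i : ℕ) (hi1 : 1 ≤ i) (hi2 : i ≤ 2*n+1) : mk i <:+: u n i := by
  refine ⟨[], List.replicate (2*n+1-i) true, ?_⟩
  simp only [List.nil_append, mk, u]
  rw [show 2*n+2-i = (2*n+1-i)+1 by omega, List.replicate_succ]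
  simp

end Stmt4
namespace Stmt4
open List

lemma count_inner {α : Type*} (Cmax S : ℕ) :
    ∀ (cs : List (List α)) (M B : List α), cs.flatten = M ++ B →
    (∀ v ∈ cs, v.length ≤ Cmax) → (∀ v ∈ cs, v <:+: M → v.length ≤ S) →
    M.length ≤ Cmax + cs.length * S := by
  intro cs
  induction cs with
  | nil =>
    intro M B hflat _ _
    have : M = [] := by
      have := congrArg List.length hflat
      simp at this
      exact List.eq_nil_of_length_eq_zero (by omega)
    simp [this]
  | cons v cs ih =>
    intro M B hflat hCmax hS
    simp only [List.flatten_cons] at hflat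
    rcases List.append_eq_append_iff.mp hflat with ⟨a', ha1, ha2⟩ | ⟨c', hc1, hc2⟩
    · -- M = v ++ a'
      have hv : v.length ≤ S := hS v (by simp) ⟨[], a', by simp [ha1]⟩
      have hrec := ih a' B ha2 (fun w hw => hCmax w (by simp [hw]))
        (fun w hw hinf => hS w (by simp [hw]) (hinf.trans ⟨v, [], by simp [ha1]⟩))
      rw [ha1]
      simp only [List.length_append, List.length_cons]
      calc v.length + a'.length ≤ S + (Cmax + cs.length * S) := by omega
        _ = Cmax + (cs.length + 1) * S := by ring
    · -- v = M ++ c'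
      have : M.length ≤ v.length := by
        have := congrArg List.length hc1
        simp at this; omega
      have := hCmax v (by simp)
      have hz : 0 ≤ cs.length * S := Nat.zero_le _
      omega

lemma count_outer {α : Type*} (Cmax S : ℕ) :
    ∀ (cs : List (List α)) (A M B : List α), cs.flatten = A ++ M ++ B →
    (∀ v ∈ cs, v.length ≤ Cmax) → (∀ v ∈ cs, v <:+: M → v.length ≤ S) →
    M.length ≤ 2 * Cmax + cs.length * S := by
  intro cs
  induction cs with
  | nil =>
    intro A M B hflat _ _
    have := congrArg List.length hflat
    simp at this
    omega
  | cons v cs ih =>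
    intro A M B hflat hCmax hS
    simp only [List.flatten_cons] at hflat
    rw [List.append_assoc] at hflat
    rcases List.append_eq_append_iff.mp hflat with ⟨a', ha1, ha2⟩ | ⟨c', hc1, hc2⟩
    · -- A = v ++ a', recurse
      have hrec := ih a' M B (by simp [ha2]) (fun w hw => hCmax w (by simp [hw]))
        (fun w hw hinf => hS w (by simp [hw]) hinf)
      have : cs.length * S ≤ (cs.length + 1) * S := by
        have : (cs.length + 1) * S = cs.length * S + S := by ring
        omega
      simp only [List.length_cons]
      omega
    · -- v = A ++ c',  c' ++ flatten cs = M ++ B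
      rcases List.append_eq_append_iff.mp hc2.symm with ⟨m', hm1, hm2⟩ | ⟨x, hx1, hx2⟩
      · -- M = c' ++ m', flatten cs = m' ++ B
        have hrec := count_inner Cmax S cs m' B hm2 (fun w hw => hCmax w (by simp [hw]))
          (fun w hw hinf => hS w (by simp [hw]) (hinf.trans ⟨c', [], by simp [hm1]⟩))
        have hc'v : c'.length ≤ v.length := by
          have := congrArg List.length hc1; simp at this; omega
        have hvC := hCmax v (by simp)
        rw [hm1]
        simp only [List.length_append, List.length_cons]
        have : (cs.length + 1) * S = cs.length * S + S := by ring
        omega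
      · -- c' = M ++ x : M inside v
        have : M.length ≤ c'.length := by
          have := congrArg List.length hx1; simp at this; omega
        have hc'v : c'.length ≤ v.length := by
          have := congrArg List.length hc1; simp at this; omega
        have hvC := hCmax v (by simp)
        have hz : 0 ≤ (cs.length + 1) * S := Nat.zero_le _
        omega

/-- Splitting the flatMap over a range at one index. -/
lemma flatMap_range_split {α : Type*} (f : ℕ → List α) (K j : ℕ) (hj : j < K) :
    ∃ A B, (List.range K).flatMap f = A ++ f j ++ B := by
  have e : K = (j+1) + (K - (j+1)) := by omega
  rw [e, List.range_add, List.flatMap_append, List.range_succ, List.flatMap_append]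
  exact ⟨(List.range j).flatMap f, (List.map (fun x => j + 1 + x) (List.range (K - (j+1)))).flatMap f,
    by simp [List.append_assoc]⟩

open Classical in
/-- The least `j ≥ 1` such that `1 0^j 1` is a factor of `v` (or `0` if none). -/
noncomputable def leastMark (v : List Bool) : ℕ :=
  if h : ∃ j, 1 ≤ j ∧ mk j <:+: v then Nat.find h else 0

lemma leastMark_spec {v : List Bool} (h : ∃ j, 1 ≤ j ∧ mk j <:+: v) :
    1 ≤ leastMark v ∧ mk (leastMark v) <:+: v := by
  unfold leastMark
  rw [dif_pos h]
  exact Nat.find_spec h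

/-- Pigeonhole: some index `i* ∈ [1, 2n+1]` is the least mark of no transition. -/
lemma choose_istar (T : Transducer) (n : ℕ) (hsize : T.n ≤ n) :
    ∃ i, 1 ≤ i ∧ i ≤ 2*n+1 ∧ ∀ (q : Fin T.n) (b : Bool),
      leastMark (T.delta q b).2 ≠ i := by
  by_contra hcon
  push_neg at hcon
  have hsub : Finset.Icc 1 (2*n+1) ⊆ Finset.image
      (fun qb : Fin T.n × Bool => leastMark (T.delta qb.1 qb.2).2)
      Finset.univ := by
    intro i hi
    simp only [Finset.mem_Icc] at hi
    obtain ⟨q, b, hqb⟩ := hcon i hi.1 hi.2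
    exact Finset.mem_image.mpr ⟨(q, b), Finset.mem_univ _, hqb⟩
  have h1 := Finset.card_le_card hsub
  rw [Nat.card_Icc] at h1
  have h2 := Finset.card_image_le (s := (Finset.univ : Finset (Fin T.n × Bool)))
    (f := fun qb : Fin T.n × Bool => leastMark (T.delta qb.1 qb.2).2)
  rw [Finset.card_univ, Fintype.card_prod, Fintype.card_fin, Fintype.card_bool] at h2
  omega

end Stmt4
theorem stmt4 (n : ℕ) (hn : 1 ≤ n) (m : ℕ) (hm : m = 16 * n ^ 2 + 36 * n + 19)
    (T : Transducer) (p : List Bool)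
    (hdesc : T.output p = xnm n m) (hsize : T.size ≤ n) :
    m ^ 2 < 2 * ((stdEnc T).length + p.length) := by
  have hout : (Stmt4.outs T T.start p).flatten = xnm n m := by
    rw [← Stmt4.run_eq_outs]; exact hdesc
  have hk : (Stmt4.outs T T.start p).length = p.length := Stmt4.outs_length T p T.start
  have hmem : ∀ v ∈ Stmt4.outs T T.start p, ∃ q b, v = (T.delta q b).2 :=
    fun v hv => Stmt4.outs_mem T p T.start v hv
  by_cases hA : ∃ q b, m^2 < 4 * ((T.delta q b).2.length + 1)
  · obtain ⟨q, b, hqb⟩ := hA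
    have hσ := Stmt4.stdEnc_length_ge T q b
    omega
  push_neg at hA
  obtain ⟨i, hi1, hi2, histar⟩ := Stmt4.choose_istar T n hsize
  obtain ⟨A, B, hAB⟩ := Stmt4.flatMap_range_split
    (fun idx => (List.replicate (m^2) (u n (idx+1))).flatten) (2*n+1) (i-1) (by omega)
  have hABx : xnm n m = A ++ (List.replicate (m^2) (u n i)).flatten ++ B := by
    rw [xnm, hAB, show i - 1 + 1 = i by omega]
  have hCmax : ∀ v ∈ Stmt4.outs T T.start p, v.length ≤ m^2 / 4 := by
    intro v hv
    obtain ⟨q, b, rfl⟩ := hmem v hv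
    have h1 := hA q b
    have h4 : (T.delta q b).2.length + 1 ≤ m^2/4 :=
      (Nat.le_div_iff_mul_le (by omega)).mpr (by omega)
    omega
  have hS : ∀ v ∈ Stmt4.outs T T.start p,
      v <:+: (List.replicate (m^2) (u n i)).flatten → v.length ≤ 2*(2*n+3) - 1 := by
    intro v hv hinf
    by_contra hlong
    push_neg at hlong
    have hcu := Stmt4.contains_u hi2 v hinf (by omega)
    have hmkv : Stmt4.mk i <:+: v := (Stmt4.mk_infix_u n i hi1 hi2).trans hcu
    obtain ⟨q, b, hv2⟩ := hmem v hv
    have hex : ∃ j, 1 ≤ j ∧ Stmt4.mk j <:+: (T.delta q b).2 := ⟨i, hi1, hv2 ▸ hmkv⟩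
    obtain ⟨hl1, hl2⟩ := Stmt4.leastMark_spec hex
    have heq : Stmt4.leastMark (T.delta q b).2 = i := by
      apply Stmt4.marks_region hi1 hi2 hl1
      have hlv : Stmt4.mk (Stmt4.leastMark (T.delta q b).2) <:+: v := hv2 ▸ hl2
      exact hlv.trans hinf
    exact histar q b heq
  have hMlen := Stmt4.W_length n i (m^2) (by omega)
  have hcount := Stmt4.count_outer (m^2/4) (2*(2*n+3)-1) (Stmt4.outs T T.start p)
    A _ B (by rw [hout, hABx]) hCmax hS
  rw [hMlen, hk] at hcount
  -- final arithmetic:  m²(2n+3) ≤ 2(m²/4) + |p|(4n+5)  ⟹  m² ≤ 2|p|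
  have e0 : 2*(2*n+3)-1 = 4*n+5 := by omega
  rw [e0] at hcount
  have e1 : 2*(m^2/4) ≤ m^2/2 := by omega
  have h1 : m^2*(2*n+3) ≤ m^2/2 + p.length*(4*n+5) := by omega
  have e2 : m^2*(4*n+6) = 2*(m^2*(2*n+3)) := by ring
  have e3 : m^2*(4*n+6) = m^2*(4*n+5) + m^2 := by ring
  have e4 : 2*(p.length*(4*n+5)) = (2*p.length)*(4*n+5) := by ring
  have h2 : m^2*(4*n+5) ≤ (2*p.length)*(4*n+5) := by omega
  have h3 : m^2 ≤ 2*p.length := Nat.le_of_mul_le_mul_right h2 (by omega)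
  have hσ := Stmt4.stdEnc_length_ge T T.start false
  omega
end

section
/- For every n, m ≥ 1, the 2n-state transducer T₁ on input p₁ = (0^m 1)^{2n−1} 0^m 1^m outputs exactly x_n(m), i.e. T₁(p₁) = x_n(m). -/
lemma run_append (T : Transducer) (q : Fin T.n) (x y : List Bool) :
    T.run q (x ++ y) =
      ((T.run (T.run q x).1 y).1, (T.run q x).2 ++ (T.run (T.run q x).1 y).2) := by
  induction x generalizing q with
  | nil => simp [Transducer.run]
  | cons a x ih => simp [Transducer.run, ih]

lemma flat_rep_rep (a b : ℕ) (l : List Bool) :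
    (List.replicate a ((List.replicate b l).flatten)).flatten
      = (List.replicate (a * b) l).flatten := by
  induction a with
  | zero => simp
  | succ a ih =>
    rw [List.replicate_succ, List.flatten_cons, ih, Nat.succ_mul, Nat.add_comm,
      List.replicate_add, List.flatten_append]

lemma run_zeros (n m : ℕ) (hn : 0 < n) (j : Fin (2 * n)) (k : ℕ) :
    (T1 n m hn).run j (List.replicate k false)
      = (j, (List.replicate (k * m) (u n (j.val + 1))).flatten) := by
  induction k with
  | zero => simp [Transducer.run]; rfl
  | succ k ih =>
    rw [List.replicate_succ]
    show (T1 n m hn).run j (false :: List.replicate k false) = _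
    have hd : (T1 n m hn).delta j false = (j, (List.replicate m (u n (j.val + 1))).flatten) := rfl
    simp only [Transducer.run, hd, ih]
    congr 1
    rw [show (k + 1) * m = m + k * m by ring, List.replicate_add, List.flatten_append]

lemma run_ones (n m : ℕ) (hn : 0 < n) (j : Fin (2 * n)) (hj : j.val = 2 * n - 1)
    (k : ℕ) :
    (T1 n m hn).run j (List.replicate k true)
      = (j, (List.replicate (k * m) (u n (2 * n + 1))).flatten) := by
  induction k with
  | zero => simp [Transducer.run]; rfl
  | succ k ih =>
    rw [List.replicate_succ]
    show (T1 n m hn).run j (true :: List.replicate k true) = _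
    have hlt : ¬ (j.val + 1 < 2 * n) := by omega
    have hd : (T1 n m hn).delta j true = (j, (List.replicate m (u n (2 * n + 1))).flatten) := by
      simp only [T1]; rw [dif_neg hlt]
    simp only [Transducer.run, hd, ih]
    congr 1
    rw [show (k + 1) * m = m + k * m by ring, List.replicate_add, List.flatten_append]

lemma stmt5_key (n m : ℕ) (hn : 0 < n) (k : ℕ) :
    ∀ (j : Fin (2 * n)), j.val + k = 2 * n - 1 →
      ((T1 n m hn).run j
        ((List.replicate k (List.replicate m false ++ [true])).flatten
          ++ (List.replicate m false ++ List.replicate m true))).2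
      = (List.range' j.val (2 * n + 1 - j.val)).flatMap
          fun i => (List.replicate (m ^ 2) (u n (i + 1))).flatten := by
  induction k with
  | zero =>
    intro j hj
    have hj' : j.val = 2 * n - 1 := by omega
    have h2 : 2 * n + 1 - j.val = 2 := by omega
    rw [h2]
    simp only [List.replicate_zero, List.flatten_nil, List.nil_append]
    erw [run_append, run_zeros, run_ones n m hn _ hj']
    have : List.range' j.val 2 = [j.val, j.val + 1] := rfl
    rw [this]
    simp only [List.flatMap_cons, List.flatMap_nil, List.append_nil]
    have h1 : j.val + 1 + 1 = 2 * n + 1 := by omega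
    rw [h1, pow_two]
  | succ k ih =>
    intro j hj
    have hlt : j.val + 1 < 2 * n := by omega
    have hblock : (T1 n m hn).run j (List.replicate m false ++ [true])
        = (⟨j.val + 1, hlt⟩, (List.replicate (m * m) (u n (j.val + 1))).flatten) := by
      erw [run_append, run_zeros]
      simp [Transducer.run, T1, dif_pos hlt]
    rw [List.replicate_succ, List.flatten_cons, List.append_assoc]
    erw [run_append, hblock]
    have ih' := ih ⟨j.val + 1, hlt⟩ (by simp; omega)
    simp only at ih'
    dsimp only
    erw [ih']
    have hr : 2 * n + 1 - j.val = (2 * n + 1 - (j.val + 1)) + 1 := by omega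
    rw [hr, List.range'_succ, List.flatMap_cons, pow_two]

theorem stmt5 (n m : ℕ) (hn : 0 < n) (hm : 1 ≤ m) :
    (T1 n m hn).output (p1 n m) = xnm n m := by
  have key := stmt5_key n m hn (2 * n - 1) (T1 n m hn).start (by
    simp [Transducer.start, T1])
  unfold Transducer.output p1 xnm
  rw [List.append_assoc]
  have hs : ((T1 n m hn).start).val = 0 := rfl
  rw [hs] at key
  rw [key, List.range_eq_range']
  simp
end

section
/- For every n ≥ 1, setting m = 16n² + 36n + 19, the finite-state complexity of x_n(m) with respect to the standard encoding satisfies C(x_n(m)) < m²/2. -/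
lemma T1_delta_false (n m : ℕ) (hn : 0 < n) (j : Fin ((T1 n m hn).n)) :
    (T1 n m hn).delta j false = (j, (List.replicate m (u n (j.val + 1))).flatten) := rfl

lemma T1_delta_true_lt (n m : ℕ) (hn : 0 < n) (j : Fin ((T1 n m hn).n))
    (h : j.val + 1 < 2 * n) :
    (T1 n m hn).delta j true = (⟨j.val + 1, h⟩, []) := by
  show (if h' : j.val + 1 < 2 * n then ((⟨j.val + 1, h'⟩ : Fin (2 * n)), ([] : List Bool))
      else (j, (List.replicate m (u n (2 * n + 1))).flatten)) = _
  rw [dif_pos h]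
  rfl

lemma T1_delta_true_last (n m : ℕ) (hn : 0 < n) (j : Fin ((T1 n m hn).n))
    (h : ¬ (j.val + 1 < 2 * n)) :
    (T1 n m hn).delta j true = (j, (List.replicate m (u n (2 * n + 1))).flatten) := by
  show (if h' : j.val + 1 < 2 * n then ((⟨j.val + 1, h'⟩ : Fin (2 * n)), ([] : List Bool))
      else (j, (List.replicate m (u n (2 * n + 1))).flatten)) = _
  rw [dif_neg h]
  rfl

lemma T1_run_zeros (n m : ℕ) (hn : 0 < n) (j : Fin ((T1 n m hn).n)) (k : ℕ) :
    (T1 n m hn).run j (List.replicate k false)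
      = (j, (List.replicate (k * m) (u n (j.val + 1))).flatten) := by
  induction k with
  | zero => simp [Transducer.run]
  | succ k ih =>
    rw [List.replicate_succ]
    simp only [Transducer.run, T1_delta_false, ih]
    rw [show (k + 1) * m = m + k * m by ring, List.replicate_add, List.flatten_append]

lemma T1_run_trues (n m : ℕ) (hn : 0 < n) (j : Fin ((T1 n m hn).n))
    (hj : ¬ (j.val + 1 < 2 * n)) (k : ℕ) :
    (T1 n m hn).run j (List.replicate k true)
      = (j, (List.replicate (k * m) (u n (2 * n + 1))).flatten) := by
  induction k with
  | zero => simp [Transducer.run]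
  | succ k ih =>
    rw [List.replicate_succ]
    simp only [Transducer.run, T1_delta_true_last n m hn j hj, ih]
    rw [show (k + 1) * m = m + k * m by ring, List.replicate_add, List.flatten_append]

lemma T1_run_true (n m : ℕ) (hn : 0 < n) (j : Fin ((T1 n m hn).n))
    (h : j.val + 1 < 2 * n) :
    (T1 n m hn).run j [true] = (⟨j.val + 1, h⟩, []) := by
  simp only [Transducer.run, T1_delta_true_lt n m hn j h]
  rfl

lemma T1_run_main (n m : ℕ) (hn : 0 < n) (c : ℕ) (j : Fin ((T1 n m hn).n))
    (hc : j.val + c = 2 * n - 1) :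
    ((T1 n m hn).run j
        ((List.replicate c (List.replicate m false ++ [true])).flatten
          ++ List.replicate m false ++ List.replicate m true)).2
      = (List.range (c + 2)).flatMap
          (fun i => (List.replicate (m * m) (u n (j.val + 1 + i))).flatten) := by
  induction c generalizing j with
  | zero =>
    have hj : ¬ (j.val + 1 < 2 * n) := by omega
    rw [List.replicate_zero, List.flatten_nil, List.nil_append, run_append,
      T1_run_zeros, T1_run_trues n m hn _ hj]
    show (List.replicate (m * m) (u n (j.val + 1))).flatten
        ++ (List.replicate (m * m) (u n (2 * n + 1))).flatten = _
    rw [show List.range 2 = [0, 1] from rfl]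
    simp only [List.flatMap_cons, List.flatMap_nil, List.append_nil]
    rw [show j.val + 1 + 0 = j.val + 1 by omega, show j.val + 1 + 1 = 2 * n + 1 by omega]
  | succ c ih =>
    have h : j.val + 1 < 2 * n := by omega
    have hc' : (⟨j.val + 1, h⟩ : Fin ((T1 n m hn).n)).val + c = 2 * n - 1 := by
      show j.val + 1 + c = 2 * n - 1
      omega
    rw [List.replicate_succ, List.flatten_cons]
    have hre : (List.replicate m false ++ [true])
          ++ (List.replicate c (List.replicate m false ++ [true])).flatten
          ++ List.replicate m false ++ List.replicate m true
        = List.replicate m false ++ ([true] ++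
          ((List.replicate c (List.replicate m false ++ [true])).flatten
            ++ List.replicate m false ++ List.replicate m true)) := by
      simp [List.append_assoc]
    rw [hre, run_append, T1_run_zeros, run_append, T1_run_true n m hn _ h]
    show (List.replicate (m * m) (u n (j.val + 1))).flatten ++ ([] ++ _) = _
    rw [List.nil_append, ih ⟨j.val + 1, h⟩ hc']
    rw [List.range_succ_eq_map (n := c + 2), List.flatMap_cons, List.flatMap_map]
    have e1 : ∀ i, (List.replicate (m * m)
          (u n ((⟨j.val + 1, h⟩ : Fin ((T1 n m hn).n)).val + 1 + i))).flatten
        = (List.replicate (m * m) (u n (j.val + 1 + Nat.succ i))).flatten := by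
      intro i
      congr 3
      show j.val + 1 + 1 + i = _
      omega
    rw [List.flatMap_congr (fun i _ => e1 i)]

lemma T1_output_eq (n m : ℕ) (hn : 0 < n) :
    (T1 n m hn).output (p1 n m) = xnm n m := by
  have hst : ((T1 n m hn).start).val + (2 * n - 1) = 2 * n - 1 := by
    simp [Transducer.start]
  have h := T1_run_main n m hn (2 * n - 1) (T1 n m hn).start hst
  unfold Transducer.output p1 xnm
  rw [h, show 2 * n - 1 + 2 = 2 * n + 1 by omega]
  apply List.flatMap_congr
  intro i _
  show (List.replicate (m * m) (u n (0 + 1 + i))).flatten = _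
  rw [show (0 : ℕ) + 1 + i = i + 1 by omega, pow_two]

lemma dagger_length : ∀ v : List Bool, (dagger v).length = 2 * v.length
  | [] => rfl
  | [_] => rfl
  | a :: b :: v => by
    show (a :: false :: dagger (b :: v)).length = _
    simp only [List.length_cons, dagger_length (b :: v)]
    omega

lemma diamond_length (v : List Bool) : (diamond v).length = 2 * (v.length + 1) := by
  simp [diamond, dagger_length]

lemma binRep_length_le (i : ℕ) : (binRep i).length ≤ i := by
  rw [binRep, List.length_reverse, Nat.size_eq_bits_len]
  exact Nat.size_le.mpr (Nat.lt_two_pow_self (n := i))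

lemma u_length (n i : ℕ) (h : i ≤ 2 * n + 2) : (u n i).length = 2 * n + 3 := by
  simp [u]; omega

lemma rep_u_flatten_length (n i k : ℕ) (h : i ≤ 2 * n + 2) :
    ((List.replicate k (u n i)).flatten).length = k * (2 * n + 3) := by
  simp [List.length_flatten, List.map_replicate, List.sum_replicate, smul_eq_mul,
    u_length n i h]

lemma T1_stdEnc_le (n m : ℕ) (hn : 0 < n) :
    (stdEnc (T1 n m hn)).length
      ≤ 2 * n * (2 * (m * (2 * n + 3) + 1) + (4 * n + 6))
        + 2 * (m * (2 * n + 3) + 1) := by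
  set M := 2 * (m * (2 * n + 3) + 1) with hM
  set bnd : Fin ((T1 n m hn).n) → ℕ :=
    fun j => (M + (4 * n + 6)) + (if j.val + 1 < 2 * n then 0 else M) with hbnd
  have key : ∀ j : Fin ((T1 n m hn).n),
      (encTransition j ((T1 n m hn).delta j false)
        ++ encTransition j ((T1 n m hn).delta j true)).length ≤ bnd j := by
    intro j
    have hj : j.val < 2 * n := j.isLt
    simp only [List.length_append, hbnd]
    have hfalse : (encTransition j ((T1 n m hn).delta j false)).length = M := by
      rw [T1_delta_false, encTransition, if_pos rfl, List.nil_append, diamond_length,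
        rep_u_flatten_length n _ m (by omega), hM]
    rw [hfalse]
    by_cases h : j.val + 1 < 2 * n
    · rw [T1_delta_true_lt n m hn j h, if_pos h, encTransition]
      have hne : (⟨j.val + 1, h⟩ : Fin (2 * n)) ≠ j :=
        Fin.ne_of_val_ne (by show j.val + 1 ≠ j.val; omega)
      dsimp only
      rw [if_neg (show (⟨j.val + 1, h⟩ : Fin ((T1 n m hn).n)) ≠ j from hne), List.length_append, diamond_length, dagger_length]
      have h1 : (binRep (j.val + 1 + 1)).length ≤ 2 * n + 1 := by
        calc (binRep (j.val + 1 + 1)).length ≤ j.val + 2 := binRep_length_le _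
          _ ≤ 2 * n + 1 := by omega
      simp only [List.length_nil]
      omega
    · rw [T1_delta_true_last n m hn j h, if_neg h, encTransition, if_pos rfl,
        List.nil_append, diamond_length, rep_u_flatten_length n _ m (by omega), hM]
      omega
  have hsum : ∀ l : List (Fin ((T1 n m hn).n)),
      ((List.map (List.length ∘ (fun j => encTransition j ((T1 n m hn).delta j false)
        ++ encTransition j ((T1 n m hn).delta j true))) l).sum ≤ (List.map bnd l).sum) :=
    fun l => List.sum_le_sum (fun j _ => key j)
  rw [stdEnc, List.length_flatMap]
  refine le_trans (hsum _) ?_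
  rw [← Fin.sum_univ_def bnd]
  have hlast : (2 * n - 1) < 2 * n := by omega
  have hite : ∀ j : Fin ((T1 n m hn).n),
      (if j.val + 1 < 2 * n then 0 else M)
      = (if (⟨2 * n - 1, hlast⟩ : Fin ((T1 n m hn).n)) = j then M else 0) := by
    intro j
    by_cases h : j.val + 1 < 2 * n
    · rw [if_pos h, if_neg]
      intro he
      have := congrArg Fin.val he
      simp only at this
      omega
    · rw [if_neg h, if_pos]
      have hj : j.val < 2 * n := j.isLt
      apply Fin.ext
      show 2 * n - 1 = j.val
      omega
  have : ∑ j : Fin ((T1 n m hn).n), bnd j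
      = 2 * n * (M + (4 * n + 6)) + M := by
    simp only [hbnd]
    rw [Finset.sum_add_distrib, Finset.sum_const, Finset.card_univ]
    rw [Finset.sum_congr rfl (fun j _ => hite j), Finset.sum_ite_eq]
    have hcard : Fintype.card (Fin ((T1 n m hn).n)) = 2 * n := by
      show Fintype.card (Fin (2 * n)) = 2 * n
      simp
    rw [hcard, if_pos (Finset.mem_univ _), smul_eq_mul]
  omega

lemma p1_length (n m : ℕ) (hn : 0 < n) :
    (p1 n m).length = (2 * n - 1) * (m + 1) + m + m := by
  simp [p1, List.length_flatten, List.map_replicate, List.sum_replicate, smul_eq_mul]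
  ring_nf

theorem stmt7 (n : ℕ) (hn : 1 ≤ n) (m : ℕ) (hm : m = 16 * n ^ 2 + 36 * n + 19) :
    2 * Cstd (xnm n m) < m ^ 2 := by
  have hn0 : 0 < n := hn
  have hmem : (stdEnc (T1 n m hn0)).length + (p1 n m).length ∈ stdSizes (xnm n m) :=
    ⟨T1 n m hn0, p1 n m, T1_output_eq n m hn0, rfl⟩
  have hC : Cstd (xnm n m) ≤ (stdEnc (T1 n m hn0)).length + (p1 n m).length :=
    Nat.sInf_le hmem
  have hB : (stdEnc (T1 n m hn0)).length + (p1 n m).length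
      ≤ 2 * n * (2 * (m * (2 * n + 3) + 1) + (4 * n + 6))
        + 2 * (m * (2 * n + 3) + 1) + ((2 * n - 1) * (m + 1) + m + m) := by
    have := T1_stdEnc_le n m hn0
    rw [p1_length n m hn0]
    omega
  have hfin : 2 * (2 * n * (2 * (m * (2 * n + 3) + 1) + (4 * n + 6))
        + 2 * (m * (2 * n + 3) + 1) + ((2 * n - 1) * (m + 1) + m + m)) < m ^ 2 := by
    have h1 : (2 * n - 1) * (m + 1) ≤ 2 * n * (m + 1) :=
      Nat.mul_le_mul_right _ (by omega)
    subst hm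
    nlinarith [sq_nonneg n, hn]
  omega
end
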